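/- arXiv:1212.5960 — 5 statements merged into one kernel-verified Lean document; each statement's English description precedes it below -/
import Mathlib

section
/- Let G be a factorizable graph and M a perfect matching of G. If X ⊆ V(G) is a barrier of G, then for any u, v ∈ X there is no M-saturated path between u and v. -/
open SimpleGraph

section Defs

variable {V : Type*} {W : Type*}

/-- A graph is factorizable if it has a perfect matching. -/
def Factorizable (G : SimpleGraph V) : Prop :=
  ∃ M : SimpleGraph.Subgraph G, M.IsPerfectMatching

/-- An edge is allowed if some perfect matching contains it. -/
def Allowed (G : SimpleGraph V) (e : Sym2 V) : Prop :=
  ∃ M : SimpleGraph.Subgraph G, M.IsPerfectMatching ∧ e ∈ M.edgeSet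

/-- The spanning subgraph formed by the allowed edges. -/
def allowedSubgraph (G : SimpleGraph V) : SimpleGraph V :=
  SimpleGraph.fromEdgeSet {e | e ∈ G.edgeSet ∧ Allowed G e}

/-- `u` and `v` lie in the same factor-component of `G`. -/
def SameFC (G : SimpleGraph V) (u v : V) : Prop :=
  (allowedSubgraph G).Reachable u v

/-- `C` is the vertex set of a factor-component of `G`. -/
def IsFactorComponent (G : SimpleGraph V) (C : Set V) : Prop :=
  ∃ v : V, C = {w | SameFC G v w}

/-- Edges alternate along a list: the `i`-th edge lies in `F` iff `i` is even. -/
def IsAltList (F : Set (Sym2 V)) (l : List (Sym2 V)) : Prop :=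
  ∀ (i : ℕ) (h : i < l.length), (l.get ⟨i, h⟩ ∈ F ↔ Even i)

/-- An `M`-saturated path: odd length, `M ∩ E(P)` a perfect matching of `P`. -/
def IsSaturatedPath {G : SimpleGraph V} (F : Set (Sym2 V)) {u v : V}
    (p : G.Walk u v) : Prop :=
  p.IsPath ∧ Odd p.length ∧ IsAltList F p.edges

/-- An `M`-balanced path from `u` to `v`: even length, `M ∩ E(P)` a near-perfect
matching of `P` exposing only `v`. -/
def IsBalancedPath {G : SimpleGraph V} (F : Set (Sym2 V)) {u v : V}
    (p : G.Walk u v) : Prop :=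
  p.IsPath ∧ Even p.length ∧ IsAltList F p.edges

/-- The number of odd components of `G - X`. -/
noncomputable def qG (G : SimpleGraph V) (X : Set V) : ℕ :=
  {c : (G.induce Xᶜ).ConnectedComponent | Odd c.supp.ncard}.ncard

/-- The set of vertices contained in odd components of `G - X`. -/
def DX (G : SimpleGraph V) (X : Set V) : Set V :=
  {v | ∃ h : v ∈ Xᶜ, Odd ((G.induce Xᶜ).connectedComponentMk ⟨v, h⟩).supp.ncard}

/-- The set of vertices contained in even components of `G - X`. -/
def CX (G : SimpleGraph V) (X : Set V) : Set V := (X ∪ DX G X)ᶜ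

/-- A barrier of a factorizable graph: `q_G(X) = |X|`. -/
def IsBarrier (G : SimpleGraph V) (X : Set V) : Prop := qG G X = X.ncard

/-- An odd-maximal barrier: no nonempty `Y ⊆ D_X` with `X ∪ Y` a barrier. -/
def IsOddMaximalBarrier (G : SimpleGraph V) (X : Set V) : Prop :=
  IsBarrier G X ∧ ∀ Y ⊆ DX G X, Y.Nonempty → ¬ IsBarrier G (X ∪ Y)

/-- Kita's equivalence relation `u ∼_G v`. -/
def simG (G : SimpleGraph V) (u v : V) : Prop :=
  SameFC G u v ∧ (u = v ∨ ¬ Factorizable (G.induce {w : V | w ≠ u ∧ w ≠ v}))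

/-- `S` is a class of the generalized canonical partition `P(G)`. -/
def IsCanonicalClass (G : SimpleGraph V) (S : Set V) : Prop :=
  ∃ v : V, S = {u | simG G u v}

/-- `S` is a member of `P_G(H)` where `C = V(H)`. -/
def IsClassOf (G : SimpleGraph V) (C S : Set V) : Prop :=
  IsCanonicalClass G S ∧ S ⊆ C

/-- A separating set meets each factor-component fully or not at all. -/
def IsSeparating (G : SimpleGraph V) (X : Set V) : Prop :=
  ∀ C : Set V, IsFactorComponent G C → C ⊆ X ∨ Disjoint C X

/-- Factor-critical: deleting any vertex leaves a factorizable (or empty) graph. -/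
def FactorCritical (H : SimpleGraph W) : Prop :=
  ∀ v : W, Factorizable (H.induce {w : W | w ≠ v})

/-- The graph `G[X]/C`: induced on `X`, with `C` contracted to a single
vertex (`none`). -/
def contractSet (G : SimpleGraph V) (X C : Set V) :
    SimpleGraph (Option {x : V // x ∈ X \ C}) :=
  SimpleGraph.fromRel (fun a b =>
    match a, b with
    | some x, some y => G.Adj x.1 y.1
    | some x, none => ∃ c ∈ C ∩ X, G.Adj x.1 c
    | none, _ => False)

/-- `X` is a critical-inducing set for the factor-component `C1` to `C2`. -/
def CriticalInducing (G : SimpleGraph V) (C1 C2 X : Set V) : Prop :=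
  IsSeparating G X ∧ C1 ∪ C2 ⊆ X ∧ FactorCritical (contractSet G X C1)

/-- Kita's partial order `C1 ◁ C2` on factor-components. -/
def compOrder (G : SimpleGraph V) (C1 C2 : Set V) : Prop :=
  ∃ X : Set V, CriticalInducing G C1 C2 X

/-- `V↑*(H)`: union of the vertex sets of all factor-components above `C`. -/
def upStar (G : SimpleGraph V) (C : Set V) : Set V :=
  {v | ∃ C' : Set V, IsFactorComponent G C' ∧ compOrder G C C' ∧ v ∈ C'}

/-- `K` is (the vertex set of) a connected component of `G[U]`. -/
def IsComponentOf (G : SimpleGraph V) (U K : Set V) : Prop :=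
  ∃ (v : V) (hv : v ∈ U),
    K = {w | ∃ hw : w ∈ U, (G.induce U).Reachable ⟨v, hv⟩ ⟨w, hw⟩}

/-- `V↑(S)` for a class `S ∈ P_G(H)` where `C = V(H)`. -/
def upOfClass (G : SimpleGraph V) (C S : Set V) : Set V :=
  {v | ∃ C' : Set V, IsFactorComponent G C' ∧ C' ≠ C ∧ compOrder G C C' ∧ v ∈ C' ∧
    ∃ K : Set V, IsComponentOf G (upStar G C \ C) K ∧ C' ⊆ K ∧
      ∀ w ∈ C, (∃ k ∈ K, G.Adj k w) → w ∈ S}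

/-- `V↑*(S) = V↑(S) ∪ S`. -/
def upStarOfClass (G : SimpleGraph V) (C S : Set V) : Set V := upOfClass G C S ∪ S

/-- The odd components of `G - X`, as a type. -/
abbrev OddCompT (G : SimpleGraph V) (X : Set V) :=
  {c : (G.induce Xᶜ).ConnectedComponent // Odd c.supp.ncard}

/-- Vertices of `H_X(G)`: vertices of `X` together with contracted odd components. -/
abbrev HVert (G : SimpleGraph V) (X : Set V) := {x : V // x ∈ X} ⊕ OddCompT G X

/-- The bipartite graph `H_X(G)`. -/
def HGraph (G : SimpleGraph V) (X : Set V) : SimpleGraph (HVert G X) :=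
  SimpleGraph.fromRel (fun a b =>
    ∃ (x : {x : V // x ∈ X}) (c : OddCompT G X) (y : (Xᶜ : Set V)),
      a = Sum.inl x ∧ b = Sum.inr c ∧
      (G.induce Xᶜ).connectedComponentMk y = c.1 ∧ G.Adj x.1 y.1)

/-- The edge set of `H_X(G)` corresponding to `M ∩ δ(X)`. -/
def projEdges (G : SimpleGraph V) (X : Set V) (M : SimpleGraph.Subgraph G) :
    Set (Sym2 (HVert G X)) :=
  {e | ∃ (x : {x : V // x ∈ X}) (c : OddCompT G X) (y : (Xᶜ : Set V)),
    (G.induce Xᶜ).connectedComponentMk y = c.1 ∧ s(x.1, y.1) ∈ M.edgeSet ∧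
    e = s(Sum.inl x, Sum.inr c)}

/-- The projection of a vertex of `G` to `H_X(G)` (`none` on `C_X`). -/
noncomputable def projV (G : SimpleGraph V) (X : Set V) (v : V) :
    Option (HVert G X) := by
  classical
  exact if h : v ∈ X then some (Sum.inl ⟨v, h⟩)
  else if ho : Odd ((G.induce Xᶜ).connectedComponentMk ⟨v, h⟩).supp.ncard then
    some (Sum.inr ⟨(G.induce Xᶜ).connectedComponentMk ⟨v, h⟩, ho⟩)
  else none

/-- The support of the contraction `P/K_1/⋯/K_l` of a path of `G` to `H_X(G)`. -/
noncomputable def contractSupport (G : SimpleGraph V) (X : Set V) (l : List V) :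
    List (HVert G X) := by
  classical
  exact List.destutter (· ≠ ·) ((l.map (projV G X)).reduceOption)

/-- One step of the Dulmage–Mendelsohn relation with respect to the color class
`A`: some edge joins `B ∩ V(c)` to `A ∩ V(d)`. -/
def dmStep (H : SimpleGraph W) (A : Set W)
    (c d : (allowedSubgraph H).ConnectedComponent) : Prop :=
  ∃ b a : W, b ∉ A ∧ a ∈ A ∧ b ∈ c.supp ∧ a ∈ d.supp ∧ H.Adj b a

/-- The Dulmage–Mendelsohn order `⪯` with respect to `A`. -/
def dmLE (H : SimpleGraph W) (A : Set W) :
    (allowedSubgraph H).ConnectedComponent →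
      (allowedSubgraph H).ConnectedComponent → Prop :=
  Relation.ReflTransGen (dmStep H A)

/-- The vertex set of the expansion of a DM-component `c` of `H_X(G)`. -/
def expansionVerts (G : SimpleGraph V) (X : Set V)
    (c : (allowedSubgraph (HGraph G X)).ConnectedComponent) : Set V :=
  {v | (∃ h : v ∈ X, Sum.inl ⟨v, h⟩ ∈ c.supp) ∨
       (∃ (h : v ∈ Xᶜ) (ho : Odd ((G.induce Xᶜ).connectedComponentMk ⟨v, h⟩).supp.ncard),
         Sum.inr ⟨(G.induce Xᶜ).connectedComponentMk ⟨v, h⟩, ho⟩ ∈ c.supp)}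

/-- A set of edges forms a perfect matching of `H`. -/
def IsPerfectMatchingSet (H : SimpleGraph W) (F : Set (Sym2 W)) : Prop :=
  F ⊆ H.edgeSet ∧ ∀ w : W, ∃! e : Sym2 W, e ∈ F ∧ w ∈ e

/-- The graph `P − E(H)`: the edges of the path `p` that are not edges of the
induced subgraph `G[C]`. -/
def earGraph (G : SimpleGraph V) (C : Set V) {u v : V} (p : G.Walk u v) :
    SimpleGraph V :=
  SimpleGraph.fromEdgeSet {e | e ∈ p.edges ∧ ¬ ∀ z ∈ e, z ∈ C}

/-- `K` is a connected component of `Q` containing at least one edge. -/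
def IsEdgeComponentOf (Q : SimpleGraph V) (K : Set V) : Prop :=
  ∃ a b : V, Q.Adj a b ∧ K = {w | Q.Reachable a w}

/-- The end vertices of a path-component `K` of `Q` (vertices of degree `≤ 1`). -/
def pathEnds (Q : SimpleGraph V) (K : Set V) : Set V :=
  {z ∈ K | ¬ ∃ w₁ w₂ : V, w₁ ≠ w₂ ∧ Q.Adj z w₁ ∧ Q.Adj z w₂}

/-- The maximum size of a matching of `G`. -/
noncomputable def matchNum (G : SimpleGraph V) : ℕ :=
  sSup {n : ℕ | ∃ M : SimpleGraph.Subgraph G, M.IsMatching ∧ M.edgeSet.ncard = n}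

/-- A barrier of a general graph, via the Berge formula. -/
def IsBarrierGen [Fintype V] (G : SimpleGraph V) (X : Set V) : Prop :=
  qG G X = (Fintype.card V - 2 * matchNum G) + X.ncard

/-- An odd-maximal barrier of a general graph. -/
def IsOddMaximalBarrierGen [Fintype V] (G : SimpleGraph V) (X : Set V) : Prop :=
  IsBarrierGen G X ∧ ∀ Y ⊆ DX G X, Y.Nonempty → ¬ IsBarrierGen G (X ∪ Y)

end Defs


section Stmt15Aux

open SimpleGraph

variable {V : Type*} {G : SimpleGraph V} {M : SimpleGraph.Subgraph G}

/-- Adjacency of the symmetric difference of the matching `M` with a list of edges `P`. -/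
def SDAdj (G : SimpleGraph V) (M : SimpleGraph.Subgraph G) (P : List (Sym2 V)) (x y : V) :
    Prop :=
  (s(x, y) ∈ M.edgeSet ∧ s(x, y) ∉ P) ∨
  (G.Adj x y ∧ s(x, y) ∈ P ∧ s(x, y) ∉ M.edgeSet)

lemma SDAdj.symm' {P : List (Sym2 V)} {x y : V} (h : SDAdj G M P x y) : SDAdj G M P y x := by
  unfold SDAdj at h ⊢
  rw [Sym2.eq_swap]
  rcases h with ⟨h1, h2⟩ | ⟨h1, h2, h3⟩
  · exact Or.inl ⟨h1, h2⟩
  · exact Or.inr ⟨h1.symm, h2, h3⟩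

lemma partner_eq (hM : M.IsPerfectMatching) {x y z : V} (h1 : s(x, y) ∈ M.edgeSet)
    (h2 : s(x, z) ∈ M.edgeSet) : y = z :=
  (hM.1 (hM.2 x)).unique (SimpleGraph.Subgraph.mem_edgeSet.mp h1)
    (SimpleGraph.Subgraph.mem_edgeSet.mp h2)

lemma sdadj_key (hM : M.IsPerfectMatching) :
    ∀ (n : ℕ) {u v : V} (p : G.Walk u v), p.length = n → p.IsPath → Odd p.length →
      IsAltList M.edgeSet p.edges →
      (∀ y, ¬ SDAdj G M p.edges u y) ∧ (∀ y, ¬ SDAdj G M p.edges v y) ∧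
        (∀ w, w ≠ u → w ≠ v → ∃! y, SDAdj G M p.edges w y) := by
  intro n
  induction n using Nat.strong_induction_on with
  | _ n IH =>
  intro u v p hn hp hodd halt
  cases p with
  | nil => simp at hodd
  | cons h1 p1 =>
  rename_i a
  cases p1 with
  | nil =>
    -- base case: single edge
    clear IH hn
    simp only [Walk.edges_cons, Walk.edges_nil] at halt ⊢
    have he0 : s(u, v) ∈ M.edgeSet := (halt 0 (by simp)).mpr Even.zero
    have hua : u ≠ v := h1.ne
    have he0' : s(v, u) ∈ M.edgeSet := by rwa [Sym2.eq_swap] at he0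
    refine ⟨?_, ?_, ?_⟩
    · rintro y (⟨hm, hnp⟩ | ⟨hadj, hmem, hnm⟩)
      · obtain rfl := partner_eq hM hm he0
        exact hnp (List.mem_singleton.mpr rfl)
      · rw [List.mem_singleton] at hmem
        rw [hmem] at hnm
        exact hnm he0
    · rintro y (⟨hm, hnp⟩ | ⟨hadj, hmem, hnm⟩)
      · obtain rfl := partner_eq hM hm he0'
        exact hnp (by rw [List.mem_singleton]; exact Sym2.eq_swap)
      · rw [List.mem_singleton, Sym2.eq_iff] at hmem
        rcases hmem with ⟨h1', h2'⟩ | ⟨h1', h2'⟩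
        · exact hua h1'.symm
        · subst h2'
          exact hnm he0'
    · intro w hwu hwa
      obtain ⟨m, hm, hmu⟩ := hM.1 (hM.2 w)
      have hmem : s(w, m) ∉ [s(u, v)] := by
        rw [List.mem_singleton, Sym2.eq_iff]
        rintro (⟨h1', h2'⟩ | ⟨h1', h2'⟩)
        · exact hwu h1'
        · exact hwa h1'
      refine ⟨m, Or.inl ⟨SimpleGraph.Subgraph.mem_edgeSet.mpr hm, hmem⟩, ?_⟩
      rintro y (⟨hm', _⟩ | ⟨_, hmem', _⟩)
      · exact hmu y (SimpleGraph.Subgraph.mem_edgeSet.mp hm')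
      · rw [List.mem_singleton, Sym2.eq_iff] at hmem'
        rcases hmem' with ⟨h1', h2'⟩ | ⟨h1', h2'⟩
        · exact (hwu h1').elim
        · exact (hwa h1').elim
  | cons h2 p2 =>
  rename_i b
  cases p2 with
  | nil =>
    -- length 2: even, contradiction
    simp [Walk.length_cons, Walk.length_nil, Nat.odd_iff] at hodd
  | cons h3 r =>
  rename_i c
  -- step case
  simp only [Walk.edges_cons] at halt ⊢
  simp only [Walk.length_cons] at hn hodd
  rw [Walk.cons_isPath_iff] at hp
  obtain ⟨hp1, hu1⟩ := hp
  rw [Walk.cons_isPath_iff] at hp1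
  obtain ⟨hp2, ha1⟩ := hp1
  have hb1 : b ∉ r.support := ((Walk.cons_isPath_iff _ _).mp hp2).2
  simp only [Walk.support_cons, List.mem_cons] at hu1 ha1
  push_neg at hu1 ha1
  obtain ⟨hua, hub, hur⟩ := hu1
  obtain ⟨hab, har⟩ := ha1
  have hvr : v ∈ r.support := Walk.end_mem_support r
  have hcr : c ∈ r.support := Walk.start_mem_support r
  have huv : u ≠ v := fun h => hur (h ▸ hvr)
  have huc : u ≠ c := fun h => hur (h ▸ hcr)
  have hav : a ≠ v := fun h => har (h ▸ hvr)
  have hbv : b ≠ v := fun h => hb1 (h ▸ hvr)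
  have hbc : b ≠ c := fun h => hb1 (h ▸ hcr)
  -- alternation facts
  have he0 : s(u, a) ∈ M.edgeSet := (halt 0 (by simp)).mpr Even.zero
  have he1 : s(a, b) ∉ M.edgeSet := fun hh =>
    (Nat.not_even_iff_odd.mpr odd_one) ((halt 1 (by simp)).mp hh)
  have he2 : s(b, c) ∈ M.edgeSet := (halt 2 (by simp)).mpr (by decide)
  have he0' : s(a, u) ∈ M.edgeSet := by rwa [Sym2.eq_swap] at he0
  have he1' : s(b, a) ∉ M.edgeSet := by rwa [Sym2.eq_swap] at he1
  -- apply the induction hypothesis to the tail q = cons h3 r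
  have hq : Odd (Walk.cons h3 r).length := by
    rw [Walk.length_cons]
    obtain ⟨k, hk⟩ := hodd
    exact ⟨k - 1, by omega⟩
  have haltq : IsAltList M.edgeSet (Walk.cons h3 r).edges := by
    intro i hi
    simp only [Walk.edges_cons, List.length_cons] at hi ⊢
    have hi2 : i + 2 < (s(u, a) :: s(a, b) :: s(b, c) :: r.edges).length := by
      simp only [List.length_cons]; omega
    have := halt (i + 2) hi2
    have h2 : ((s(b, c) :: r.edges).get ⟨i, hi⟩ ∈ M.edgeSet ↔ Even (i + 2)) := this
    rwa [show Even (i + 2) ↔ Even i by simp [Nat.even_add]] at h2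
  have IHq := IH (Walk.cons h3 r).length (by rw [Walk.length_cons]; omega)
    (Walk.cons h3 r) rfl hp2 hq haltq
  simp only [Walk.edges_cons] at IHq
  obtain ⟨IHb, IHv, IHw⟩ := IHq
  -- transfer lemma
  have htrans : ∀ w y, w ≠ u → w ≠ a → w ≠ b →
      (SDAdj G M (s(u, a) :: s(a, b) :: s(b, c) :: r.edges) w y ↔
        SDAdj G M (s(b, c) :: r.edges) w y) := by
    intro w y hwu hwa hwb
    have hmm : s(w, y) ∈ (s(u, a) :: s(a, b) :: s(b, c) :: r.edges) ↔
        s(w, y) ∈ (s(b, c) :: r.edges) := by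
      simp only [List.mem_cons]
      constructor
      · rintro (h | h | h)
        · rw [Sym2.eq_iff] at h
          rcases h with ⟨h1', h2'⟩ | ⟨h1', h2'⟩
          · exact (hwu h1').elim
          · exact (hwa h1').elim
        · rw [Sym2.eq_iff] at h
          rcases h with ⟨h1', h2'⟩ | ⟨h1', h2'⟩
          · exact (hwa h1').elim
          · exact (hwb h1').elim
        · exact h
      · rintro (h | h)
        · exact Or.inr (Or.inr (Or.inl h))
        · exact Or.inr (Or.inr (Or.inr h))
    unfold SDAdj
    rw [hmm]
  have hqsup : ∀ w y, s(w, y) ∈ (s(b, c) :: r.edges) → w = b ∨ w ∈ r.support := by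
    intro w y hwy
    rcases List.mem_cons.mp hwy with h | h
    · rw [Sym2.eq_iff] at h
      rcases h with ⟨h1', h2'⟩ | ⟨h1', h2'⟩
      · exact Or.inl h1'
      · exact Or.inr (h1' ▸ hcr)
    · exact Or.inr (Walk.fst_mem_support_of_mem_edges r h)
  refine ⟨?_, ?_, ?_⟩
  · -- u is not covered
    rintro y (⟨hm, hnp⟩ | ⟨hadj, hmem, hnm⟩)
    · obtain rfl := partner_eq hM hm he0
      exact hnp (by simp)
    · rcases List.mem_cons.mp hmem with hh | hmem1
      · rw [hh] at hnm; exact hnm he0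
      rcases List.mem_cons.mp hmem1 with hh | hmem2
      · rw [Sym2.eq_iff] at hh
        rcases hh with ⟨h1', h2'⟩ | ⟨h1', h2'⟩
        · exact hua h1'
        · exact hub h1'
      · rcases hqsup u y hmem2 with h | h
        · exact hub h
        · exact hur h
  · -- v is not covered
    intro y hy
    exact IHv y ((htrans v y huv.symm (fun h => hav h.symm) (fun h => hbv h.symm)).mp hy)
  · intro w hwu hwv
    by_cases hwa : w = a
    · refine ⟨b, ?_, ?_⟩
      · rw [hwa]
        exact Or.inr ⟨h2, by simp, he1⟩
      rintro y (⟨hm, hnp⟩ | ⟨hadj, hmem, hnm⟩)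
      · rw [hwa] at hm hnp
        obtain rfl := partner_eq hM hm he0'
        exact (hnp (by simp [Sym2.eq_swap])).elim
      · rw [hwa] at hmem hnm
        rcases List.mem_cons.mp hmem with hh | hmem1
        · rw [Sym2.eq_iff] at hh
          rcases hh with ⟨h1', h2'⟩ | ⟨h1', h2'⟩
          · exact (hua h1'.symm).elim
          · rw [h2'] at hnm; exact (hnm he0').elim
        rcases List.mem_cons.mp hmem1 with hh | hmem2
        · rw [Sym2.eq_iff] at hh
          rcases hh with ⟨h1', h2'⟩ | ⟨h1', h2'⟩
          · exact h2'
          · exact (hab h1').elim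
        · rcases hqsup a y hmem2 with h | h
          · exact (hab h).elim
          · exact (har h).elim
    by_cases hwb : w = b
    · refine ⟨a, ?_, ?_⟩
      · rw [hwb]
        exact Or.inr ⟨h2.symm, by rw [Sym2.eq_swap]; simp, he1'⟩
      have he2' : s(b, c) ∈ (s(u, a) :: s(a, b) :: s(b, c) :: r.edges) := by simp
      rintro y (⟨hm, hnp⟩ | ⟨hadj, hmem, hnm⟩)
      · rw [hwb] at hm hnp
        obtain rfl := partner_eq hM hm he2
        exact (hnp he2').elim
      · rw [hwb] at hmem hnm
        rcases List.mem_cons.mp hmem with hh | hmem1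
        · rw [Sym2.eq_iff] at hh
          rcases hh with ⟨h1', h2'⟩ | ⟨h1', h2'⟩
          · exact (hub h1'.symm).elim
          · exact (hab h1'.symm).elim
        rcases List.mem_cons.mp hmem1 with hh | hmem2
        · rw [Sym2.eq_iff] at hh
          rcases hh with ⟨h1', h2'⟩ | ⟨h1', h2'⟩
          · exact (hab h1'.symm).elim
          · exact h2'
        · rcases List.mem_cons.mp hmem2 with hh | hmem3
          · rw [hh] at hnm; exact (hnm he2).elim
          · exact absurd (Walk.fst_mem_support_of_mem_edges r hmem3) hb1
    · exact (existsUnique_congr (fun y => htrans w y hwu hwa hwb)).mpr (IHw w hwb hwv)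

end Stmt15Aux

theorem stmt15 {V : Type*} [Fintype V] (G : SimpleGraph V)
    (M : SimpleGraph.Subgraph G) (hM : M.IsPerfectMatching)
    (X : Set V) (hX : IsBarrier G X)
    (u v : V) (hu : u ∈ X) (hv : v ∈ X) :
    ∀ p : G.Walk u v, ¬ IsSaturatedPath M.edgeSet p := by
  classical
  rintro p ⟨hpath, hodd, halt⟩
  have huv : u ≠ v := by
    intro h
    cases p with
    | nil => simp at hodd
    | cons h1 q =>
      subst h
      exact ((SimpleGraph.Walk.cons_isPath_iff _ _).mp hpath).2
        (SimpleGraph.Walk.end_mem_support q)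
  obtain ⟨hu0, hv0, hex⟩ := sdadj_key hM p.length p rfl hpath hodd halt
  have hXc : ∀ (w : V), w ∈ (Xᶜ : Set V) → w ≠ u ∧ w ≠ v :=
    fun w hw => ⟨fun h => hw (h ▸ hu), fun h => hw (h ▸ hv)⟩
  have hchoice : ∀ c : (G.induce Xᶜ).ConnectedComponent, Odd c.supp.ncard →
      ∃ x : V, ((x ∈ X ∧ x ≠ u) ∧ x ≠ v) ∧
        ∃ w : ↥(Xᶜ : Set V), w ∈ c.supp ∧ SDAdj G M p.edges x ↑w := by
    intro c hc
    have hA : ∃ w : ↥(Xᶜ : Set V), w ∈ c.supp ∧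
        ∃ x, SDAdj G M p.edges ↑w x ∧ x ∉ Subtype.val '' c.supp := by
      by_contra hall
      push_neg at hall
      set Nc : SimpleGraph.Subgraph G := {
        verts := Subtype.val '' c.supp
        Adj := fun x y => SDAdj G M p.edges x y ∧ x ∈ Subtype.val '' c.supp ∧
          y ∈ Subtype.val '' c.supp
        adj_sub := fun h => (h.1.elim
          (fun h' => M.adj_sub (SimpleGraph.Subgraph.mem_edgeSet.mp h'.1)) (fun h' => h'.1))
        edge_vert := fun h => h.2.1
        symm := ⟨fun x y h => ⟨h.1.symm', h.2.2, h.2.1⟩⟩ } with hNc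
      have hm : Nc.IsMatching := by
        rintro w ⟨w', hw', rfl⟩
        obtain ⟨hwu, hwv⟩ := hXc _ w'.2
        obtain ⟨y, hy, hyu⟩ := hex _ hwu hwv
        exact ⟨y, ⟨hy, ⟨w', hw', rfl⟩, hall w' hw' y hy⟩, fun z hz => hyu z hz.1⟩
      haveI : Fintype ↥Nc.verts := Fintype.ofFinite _
      have heven := hm.even_card
      rw [← Set.ncard_eq_toFinset_card'] at heven
      have hcardeq : Nc.verts.ncard = c.supp.ncard :=
        Set.ncard_image_of_injective _ Subtype.val_injective
      rw [hcardeq] at heven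
      exact (Nat.not_even_iff_odd.mpr hc) heven
    obtain ⟨w, hw, x, hadj, hxS⟩ := hA
    have hxu : x ≠ u := by rintro rfl; exact hu0 _ hadj.symm'
    have hxv : x ≠ v := by rintro rfl; exact hv0 _ hadj.symm'
    have hxX : x ∈ X := by
      by_contra hxX
      apply hxS
      refine ⟨⟨x, hxX⟩, ?_, rfl⟩
      rw [SimpleGraph.ConnectedComponent.mem_supp_iff] at hw ⊢
      rw [← hw]
      apply SimpleGraph.ConnectedComponent.sound
      have hGadj : G.Adj ↑w x := hadj.elim
        (fun h' => M.adj_sub (SimpleGraph.Subgraph.mem_edgeSet.mp h'.1)) (fun h' => h'.1)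
      exact SimpleGraph.Adj.reachable (by simpa using hGadj.symm)
    exact ⟨x, ⟨⟨hxX, hxu⟩, hxv⟩, w, hw, hadj.symm'⟩
  set f : (G.induce Xᶜ).ConnectedComponent → V :=
    fun c => if h : Odd c.supp.ncard then (hchoice c h).choose else u with hf
  have hmaps : ∀ c ∈ {c : (G.induce Xᶜ).ConnectedComponent | Odd c.supp.ncard},
      f c ∈ X \ {u, v} := by
    intro c hc
    have hc' : Odd c.supp.ncard := hc
    have hfc : f c = (hchoice c hc').choose := by rw [hf]; exact dif_pos hc'
    rw [hfc]
    obtain ⟨⟨⟨h1, h2⟩, h3⟩, _⟩ := (hchoice c hc').choose_spec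
    refine ⟨h1, ?_⟩
    simp only [Set.mem_insert_iff, Set.mem_singleton_iff, not_or]
    exact ⟨h2, h3⟩
  have hinj : Set.InjOn f {c : (G.induce Xᶜ).ConnectedComponent | Odd c.supp.ncard} := by
    intro c1 hc1 c2 hc2 hfeq
    have hc1' : Odd c1.supp.ncard := hc1
    have hc2' : Odd c2.supp.ncard := hc2
    have hfc1 : f c1 = (hchoice c1 hc1').choose := by rw [hf]; exact dif_pos hc1'
    have hfc2 : f c2 = (hchoice c2 hc2').choose := by rw [hf]; exact dif_pos hc2'
    rw [hfc1, hfc2] at hfeq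
    obtain ⟨⟨⟨_, h1u⟩, h1v⟩, w1, hw1, hadj1⟩ := (hchoice c1 hc1').choose_spec
    obtain ⟨⟨⟨_, h2u⟩, h2v⟩, w2, hw2, hadj2⟩ := (hchoice c2 hc2').choose_spec
    obtain ⟨y, hy, hyu⟩ := hex _ h2u h2v
    have e1 : (↑w1 : V) = y := hyu _ (hfeq ▸ hadj1)
    have e2 : (↑w2 : V) = y := hyu _ hadj2
    have hww : w1 = w2 := Subtype.ext (e1.trans e2.symm)
    rw [SimpleGraph.ConnectedComponent.mem_supp_iff] at hw1 hw2
    rw [← hw1, ← hw2, hww]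
  have hle : qG G X ≤ (X \ {u, v}).ncard :=
    Set.ncard_le_ncard_of_injOn f hmaps hinj (Set.toFinite _)
  have hsub : ({u, v} : Set V) ⊆ X := by
    intro z hz
    rcases hz with rfl | hz
    · exact hu
    · rw [Set.mem_singleton_iff] at hz; exact hz ▸ hv
  have hdiff : (X \ {u, v}).ncard = X.ncard - 2 := by
    rw [Set.ncard_diff hsub (Set.toFinite _), Set.ncard_pair huv]
  have hcard : 2 ≤ X.ncard := by
    calc 2 = ({u, v} : Set V).ncard := (Set.ncard_pair huv).symm
    _ ≤ X.ncard := Set.ncard_le_ncard hsub (Set.toFinite _)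
  have hqx : qG G X = X.ncard := hX
  omega
end

section
/- Let G be a factorizable graph, M a perfect matching of G, and X a barrier of G. Then for any x ∈ X and y ∈ C_X, there is no M-saturated path between x and y, and no M-balanced path from x to y. -/
open SimpleGraph

namespace Aux16


variable {V : Type*} {G : SimpleGraph V} {M : SimpleGraph.Subgraph G}

/-- The symmetric difference of `M` with a list of edges, as an adjacency
relation. -/
def Nadj (M : SimpleGraph.Subgraph G) (E : List (Sym2 V)) (v w : V) : Prop :=
  (M.Adj v w ∧ s(v, w) ∉ E) ∨ (s(v, w) ∈ E ∧ ¬ M.Adj v w)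

lemma Nadj.symm' {E : List (Sym2 V)} {v w : V} (h : Nadj M E v w) : Nadj M E w v := by
  rcases h with ⟨h1, h2⟩ | ⟨h1, h2⟩
  · exact Or.inl ⟨h1.symm, by rwa [Sym2.eq_swap]⟩
  · exact Or.inr ⟨by rwa [Sym2.eq_swap], fun hh => h2 hh.symm⟩

lemma Nadj.adj {u v : V} {p : G.Walk u v} {z w : V}
    (h : Nadj M p.edges z w) : G.Adj z w := by
  rcases h with ⟨h1, _⟩ | ⟨h1, _⟩
  · exact M.adj_sub h1
  · exact p.adj_of_mem_edges h1

/-- Alternation with the opposite phase. -/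
def AltN (F : Set (Sym2 V)) (l : List (Sym2 V)) : Prop :=
  ∀ (i : ℕ) (h : i < l.length), (l.get ⟨i, h⟩ ∈ F ↔ Odd i)

lemma isAltList_cons {F : Set (Sym2 V)} {e : Sym2 V} {l : List (Sym2 V)}
    (h : IsAltList F (e :: l)) : e ∈ F ∧ AltN F l := by
  constructor
  · simpa using h 0 (by simp)
  · intro i hi
    have := h (i + 1) (by simpa using Nat.succ_lt_succ hi)
    simpa [Nat.even_add_one, Nat.not_even_iff_odd] using this

lemma altN_cons {F : Set (Sym2 V)} {e : Sym2 V} {l : List (Sym2 V)}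
    (h : AltN F (e :: l)) : e ∉ F ∧ IsAltList F l := by
  constructor
  · simpa using h 0 (by simp)
  · intro i hi
    have := h (i + 1) (by simpa using Nat.succ_lt_succ hi)
    simpa [Nat.odd_add_one, Nat.not_odd_iff_even] using this

lemma mem_edges_cons_self {u b v w : V} {h : G.Adj u b} {q : G.Walk b v}
    (hp : (SimpleGraph.Walk.cons h q).IsPath) :
    s(u, w) ∈ (SimpleGraph.Walk.cons h q).edges ↔ w = b := by
  rw [SimpleGraph.Walk.edges_cons, List.mem_cons]
  constructor
  · rintro (he | he)
    · exact Sym2.congr_right.mp he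
    · exact absurd (q.fst_mem_support_of_mem_edges he)
        ((SimpleGraph.Walk.cons_isPath_iff h q).mp hp).2
  · rintro rfl; exact Or.inl rfl

lemma mem_edges_cons_of_ne {u b v z w : V} {h : G.Adj u b} {q : G.Walk b v}
    (hzu : z ≠ u) (hzb : z ≠ b) :
    s(z, w) ∈ (SimpleGraph.Walk.cons h q).edges ↔ s(z, w) ∈ q.edges := by
  rw [SimpleGraph.Walk.edges_cons, List.mem_cons]
  constructor
  · rintro (he | he)
    · rcases Sym2.eq_iff.mp he with ⟨h1, _⟩ | ⟨h1, _⟩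
      · exact absurd h1 hzu
      · exact absurd h1 hzb
    · exact he
  · exact Or.inr

/-- Core lemma: properties of the symmetric difference of a perfect matching
with an alternating path. -/
lemma core (hM : M.IsPerfectMatching) :
    ∀ (n : ℕ) (u v : V) (p : G.Walk u v), p.length ≤ n → p.IsPath →
      ((IsAltList M.edgeSet p.edges →
         (∀ z, z ≠ u → z ≠ v → ∃! w, Nadj M p.edges z w) ∧
         (0 < p.length → ∀ w, ¬ Nadj M p.edges u w)) ∧
       (AltN M.edgeSet p.edges →
         (∀ z, z ≠ u → z ≠ v → ∃! w, Nadj M p.edges z w) ∧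
         (∀ w, Nadj M p.edges u w ↔ (M.Adj u w ∨ s(u, w) ∈ p.edges)))) := by
  intro n
  induction n with
  | zero =>
    intro u v p hlen _
    cases p with
    | nil =>
      have hnadj : ∀ z w : V, Nadj M (SimpleGraph.Walk.nil : G.Walk u u).edges z w ↔ M.Adj z w := by
        intro z w; simp [Nadj]
      constructor
      · intro _
        refine ⟨fun z _ _ => ?_, fun h0 => by simp at h0⟩
        exact (existsUnique_congr (hnadj z)).mpr (hM.1 (hM.2 z))
      · intro _
        refine ⟨fun z _ _ => (existsUnique_congr (hnadj z)).mpr (hM.1 (hM.2 z)), fun w => ?_⟩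
        simp [Nadj]
    | cons h q => simp at hlen
  | succ n ih =>
    intro u v p hlen hpath
    cases p with
    | nil =>
      have hnadj : ∀ z w : V, Nadj M (SimpleGraph.Walk.nil : G.Walk u u).edges z w ↔ M.Adj z w := by
        intro z w; simp [Nadj]
      constructor
      · intro _
        refine ⟨fun z _ _ => ?_, fun h0 => by simp at h0⟩
        exact (existsUnique_congr (hnadj z)).mpr (hM.1 (hM.2 z))
      · intro _
        refine ⟨fun z _ _ => (existsUnique_congr (hnadj z)).mpr (hM.1 (hM.2 z)), fun w => ?_⟩
        simp [Nadj]
    | @cons _ b _ h q =>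
      obtain ⟨hq, hu⟩ := (SimpleGraph.Walk.cons_isPath_iff h q).mp hpath
      have hlenq : q.length ≤ n := by
        simp only [SimpleGraph.Walk.length_cons] at hlen; omega
      have hbu : b ≠ u := by
        intro hh
        exact hu (hh ▸ q.start_mem_support)
      constructor
      · -- phase M
        intro halt
        rw [SimpleGraph.Walk.edges_cons] at halt
        obtain ⟨he0, haltN⟩ := isAltList_cons halt
        have hMub : M.Adj u b := SimpleGraph.Subgraph.mem_edgeSet.mp he0
        obtain ⟨Bq1, Bq2⟩ := (ih b v q hlenq hq).2 haltN
        have hA2 : ∀ w, ¬ Nadj M (SimpleGraph.Walk.cons h q).edges u w := by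
          intro w hw
          rcases hw with ⟨h1, h2⟩ | ⟨h1, h2⟩
          · obtain ⟨w0, _, huniq⟩ := hM.1 (hM.2 u)
            have hwb : w = b := (huniq w h1).trans (huniq b hMub).symm
            subst hwb
            exact h2 (by rw [SimpleGraph.Walk.edges_cons]; exact List.mem_cons_self)
          · have hwb : w = b := (mem_edges_cons_self hpath).mp h1
            subst hwb
            exact h2 hMub
        refine ⟨?_, fun _ => hA2⟩
        intro z hzu hzv
        by_cases hzb : z = b
        · subst hzb
          cases q with
          | nil => exact absurd rfl hzv
          | @cons _ b2 _ h' r =>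
            rw [SimpleGraph.Walk.edges_cons] at haltN
            obtain ⟨he1, _⟩ := altN_cons haltN
            obtain ⟨_, hbr⟩ := (SimpleGraph.Walk.cons_isPath_iff h' r).mp hq
            refine ⟨b2, Or.inr ⟨?_,
              fun hh => he1 (SimpleGraph.Subgraph.mem_edgeSet.mpr hh)⟩, ?_⟩
            · rw [SimpleGraph.Walk.edges_cons, SimpleGraph.Walk.edges_cons]
              exact List.mem_cons_of_mem _ (List.mem_cons_self)
            · intro w hw
              rcases hw with ⟨h1, h2⟩ | ⟨h1, h2⟩
              · obtain ⟨w0, _, huniq⟩ := hM.1 (hM.2 z)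
                have hwu : w = u := (huniq w h1).trans (huniq u hMub.symm).symm
                subst hwu
                refine absurd ?_ h2
                rw [Sym2.eq_swap, SimpleGraph.Walk.edges_cons]
                exact List.mem_cons_self
              · rw [SimpleGraph.Walk.edges_cons, List.mem_cons] at h1
                rcases h1 with he | h1
                · rcases Sym2.eq_iff.mp he with ⟨hbad, _⟩ | ⟨_, rfl⟩
                  · exact absurd hbad hbu
                  · exact absurd hMub.symm h2
                · rw [SimpleGraph.Walk.edges_cons, List.mem_cons] at h1
                  rcases h1 with he | h1
                  · exact Sym2.congr_right.mp he
                  · exact absurd (r.fst_mem_support_of_mem_edges h1) hbr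
        · have htrans : ∀ w, Nadj M (SimpleGraph.Walk.cons h q).edges z w ↔
              Nadj M q.edges z w := by
            intro w
            unfold Nadj
            rw [mem_edges_cons_of_ne hzu hzb]
          exact (existsUnique_congr htrans).mpr (Bq1 z hzb hzv)
      · -- phase nonM
        intro haltN
        rw [SimpleGraph.Walk.edges_cons] at haltN
        obtain ⟨he0, haltM⟩ := altN_cons haltN
        obtain ⟨Aq1, Aq2⟩ := (ih b v q hlenq hq).1 haltM
        have hB2 : ∀ w, Nadj M (SimpleGraph.Walk.cons h q).edges u w ↔
            (M.Adj u w ∨ s(u, w) ∈ (SimpleGraph.Walk.cons h q).edges) := by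
          intro w
          constructor
          · rintro (⟨h1, _⟩ | ⟨h1, _⟩)
            · exact Or.inl h1
            · exact Or.inr h1
          · rintro (h1 | h1)
            · refine Or.inl ⟨h1, fun hmem => ?_⟩
              have hwb : w = b := (mem_edges_cons_self hpath).mp hmem
              subst hwb
              exact he0 (SimpleGraph.Subgraph.mem_edgeSet.mpr h1)
            · refine Or.inr ⟨h1, fun hM' => ?_⟩
              have hwb : w = b := (mem_edges_cons_self hpath).mp h1
              subst hwb
              exact he0 (SimpleGraph.Subgraph.mem_edgeSet.mpr hM')
        refine ⟨?_, hB2⟩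
        intro z hzu hzv
        by_cases hzb : z = b
        · subst hzb
          have hqpos : 0 < q.length := by
            cases q with
            | nil => exact absurd rfl hzv
            | cons h' r => simp
          refine ⟨u, Or.inr ⟨?_,
            fun hh => he0 (SimpleGraph.Subgraph.mem_edgeSet.mpr hh.symm)⟩, ?_⟩
          · rw [Sym2.eq_swap, SimpleGraph.Walk.edges_cons]
            exact List.mem_cons_self
          · intro w hw
            rcases hw with ⟨h1, h2⟩ | ⟨h1, h2⟩
            · exfalso
              refine Aq2 hqpos w (Or.inl ⟨h1, fun hh => h2 ?_⟩)
              rw [SimpleGraph.Walk.edges_cons]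
              exact List.mem_cons_of_mem _ hh
            · rw [SimpleGraph.Walk.edges_cons, List.mem_cons] at h1
              rcases h1 with he | h1
              · rcases Sym2.eq_iff.mp he with ⟨hbad, _⟩ | ⟨_, rfl⟩
                · exact absurd hbad hbu
                · rfl
              · exact absurd (Or.inr ⟨h1, h2⟩) (Aq2 hqpos w)
        · have htrans : ∀ w, Nadj M (SimpleGraph.Walk.cons h q).edges z w ↔
              Nadj M q.edges z w := by
            intro w
            unfold Nadj
            rw [mem_edges_cons_of_ne hzu hzb]
          exact (existsUnique_congr htrans).mpr (Aq1 z hzb hzv)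


/-- Escape lemma: an odd component of `G - X` all of whose vertices are matched
by `Nadj` must send a `Nadj`-edge into `X`. -/
lemma escape [Fintype V] {X : Set V} {E : List (Sym2 V)}
    (hE : ∀ v w : V, Nadj M E v w → G.Adj v w)
    {x y : V} (hx : x ∈ X) (hy : y ∉ DX G X)
    (hA1 : ∀ z, z ≠ x → z ≠ y → ∃! w, Nadj M E z w)
    (c : (G.induce Xᶜ).ConnectedComponent) (hodd : Odd c.supp.ncard)
    (hno : ∀ (a : ↥(Xᶜ : Set V)) (w : V), a ∈ c.supp → w ∈ X → ¬ Nadj M E a.1 w) :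
    False := by
  classical
  set K : SimpleGraph.Subgraph G :=
    { verts := Subtype.val '' c.supp
      Adj := fun v w => Nadj M E v w ∧ v ∈ Subtype.val '' c.supp ∧ w ∈ Subtype.val '' c.supp
      adj_sub := fun hvw => hE _ _ hvw.1
      edge_vert := fun hvw => hvw.2.1
      symm := ⟨fun v w hvw => ⟨hvw.1.symm', hvw.2.2, hvw.2.1⟩⟩ } with hK
  have hmatch : K.IsMatching := by
    intro v hv
    obtain ⟨a, ha, rfl⟩ := hv
    have hax : a.1 ≠ x := fun hh => a.2 (hh ▸ hx)
    have hay : a.1 ≠ y := by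
      intro hh
      apply hy
      rw [← hh]
      refine ⟨a.2, ?_⟩
      have : (⟨a.1, a.2⟩ : ↥(Xᶜ : Set V)) = a := rfl
      rw [this, (SimpleGraph.ConnectedComponent.mem_supp_iff c a).mp ha]
      exact hodd
    obtain ⟨w, hw, huniq⟩ := hA1 a.1 hax hay
    have hwX : w ∉ X := fun hh => hno a w ha hh hw
    have hadj : (G.induce (Xᶜ : Set V)).Adj a ⟨w, hwX⟩ := by
      simpa using hE _ _ hw
    have hwsupp : (⟨w, hwX⟩ : ↥(Xᶜ : Set V)) ∈ c.supp := by
      rw [SimpleGraph.ConnectedComponent.mem_supp_iff]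
      rw [← (SimpleGraph.ConnectedComponent.mem_supp_iff c a).mp ha]
      exact SimpleGraph.ConnectedComponent.sound hadj.symm.reachable
    refine ⟨w, ⟨hw, ⟨a, ha, rfl⟩, ⟨⟨w, hwX⟩, hwsupp, rfl⟩⟩, ?_⟩
    intro w' hw'
    exact huniq w' hw'.1
  haveI : Fintype ↥K.verts := Fintype.ofFinite _
  have heven := hmatch.even_card
  rw [← Set.ncard_eq_toFinset_card'] at heven
  have hcard : K.verts.ncard = c.supp.ncard := by
    rw [hK]
    exact Set.ncard_image_of_injective c.supp Subtype.val_injective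
  rw [hcard] at heven
  exact (Nat.not_odd_iff_even.mpr heven) hodd

/-- Main lemma: there is no positive-length `M`-alternating path starting with a
matching edge from a barrier vertex to a vertex outside `X ∪ D_X`. -/
lemma main [Fintype V] (hM : M.IsPerfectMatching) {X : Set V} (hX : IsBarrier G X)
    {x y : V} (hx : x ∈ X) (hyX : y ∉ X) (hyD : y ∉ DX G X)
    {p : G.Walk x y} (hpath : p.IsPath) (hpos : 0 < p.length)
    (halt : IsAltList M.edgeSet p.edges)
    (hcoreA : (∀ z, z ≠ x → z ≠ y → ∃! w, Nadj M p.edges z w) ∧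
      (0 < p.length → ∀ w, ¬ Nadj M p.edges x w))
    (hE : ∀ v w : V, Nadj M p.edges v w → G.Adj v w) : False := by
  classical
  obtain ⟨hA1, hA2'⟩ := hcoreA
  have hA2 := hA2' hpos
  set S : Set ((G.induce (Xᶜ : Set V)).ConnectedComponent) :=
    {c | Odd c.supp.ncard} with hS
  have hex : ∀ c ∈ S, ∃ (a : ↥(Xᶜ : Set V)) (w : V),
      a ∈ c.supp ∧ w ∈ X ∧ Nadj M p.edges a.1 w := by
    intro c hc
    by_contra hcon
    push_neg at hcon
    exact escape hE hx hyD hA1 c hc (fun a w ha hw hn => hcon a w ha hw hn)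
  set f : (G.induce (Xᶜ : Set V)).ConnectedComponent → V := fun c =>
    if h : ∃ (a : ↥(Xᶜ : Set V)) (w : V),
        a ∈ c.supp ∧ w ∈ X ∧ Nadj M p.edges a.1 w then
      h.choose_spec.choose
    else x with hf
  have hfprop : ∀ c ∈ S, f c ∈ X ∧ ∃ a : ↥(Xᶜ : Set V),
      a ∈ c.supp ∧ Nadj M p.edges a.1 (f c) := by
    intro c hc
    have h := hex c hc
    rw [hf]
    simp only [dif_pos h]
    obtain ⟨ha, hw, hn⟩ := h.choose_spec.choose_spec
    exact ⟨hw, h.choose, ha, hn⟩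
  have hfnx : ∀ c ∈ S, f c ≠ x := by
    intro c hc hh
    obtain ⟨_, a, _, hn⟩ := hfprop c hc
    exact hA2 a.1 (hh ▸ hn).symm'
  have hinj : Set.InjOn f S := by
    intro c1 hc1 c2 hc2 heq
    obtain ⟨hw1, a1, ha1, hn1⟩ := hfprop c1 hc1
    obtain ⟨hw2, a2, ha2, hn2⟩ := hfprop c2 hc2
    have hwx : f c1 ≠ x := hfnx c1 hc1
    have hwy : f c1 ≠ y := fun hh => hyX (hh ▸ hw1)
    obtain ⟨z0, _, huniq⟩ := hA1 (f c1) hwx hwy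
    have h1 : a1.1 = z0 := huniq a1.1 hn1.symm'
    have h2 : a2.1 = z0 := huniq a2.1 (heq ▸ hn2).symm'
    have ha12 : a1 = a2 := Subtype.val_injective (h1.trans h2.symm)
    rw [← (SimpleGraph.ConnectedComponent.mem_supp_iff c1 a1).mp ha1,
      ← (SimpleGraph.ConnectedComponent.mem_supp_iff c2 a2).mp ha2, ha12]
  have hle : S.ncard ≤ (X \ {x}).ncard := by
    refine Set.ncard_le_ncard_of_injOn f (fun c hc => ?_) hinj (Set.toFinite _)
    exact ⟨(hfprop c hc).1, hfnx c hc⟩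
  have hlt : (X \ {x}).ncard < X.ncard :=
    Set.ncard_diff_singleton_lt_of_mem hx (Set.toFinite X)
  have hq : qG G X = S.ncard := rfl
  rw [IsBarrier, hq] at hX
  omega


end Aux16

theorem stmt16 {V : Type*} [Fintype V] (G : SimpleGraph V)
    (M : SimpleGraph.Subgraph G) (hM : M.IsPerfectMatching)
    (X : Set V) (hX : IsBarrier G X)
    (x y : V) (hx : x ∈ X) (hy : y ∈ CX G X) :
    (∀ p : G.Walk x y, ¬ IsSaturatedPath M.edgeSet p) ∧
    (∀ p : G.Walk x y, ¬ IsBalancedPath M.edgeSet p) := by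
  classical
  have hyX : y ∉ X := fun hh => hy (Or.inl hh)
  have hyD : y ∉ DX G X := fun hh => hy (Or.inr hh)
  have key : ∀ p : G.Walk x y, p.IsPath → 0 < p.length →
      IsAltList M.edgeSet p.edges → False := by
    intro p hpath hpos halt
    have hcore := (Aux16.core hM p.length x y p le_rfl hpath).1 halt
    exact Aux16.main hM hX hx hyX hyD hpath hpos halt hcore
      (fun v w hn => Aux16.Nadj.adj hn)
  constructor
  · intro p hp
    obtain ⟨hpath, hodd, halt⟩ := hp
    obtain ⟨k, hk⟩ := hodd
    exact key p hpath (by omega) halt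
  · intro p hp
    obtain ⟨hpath, heven, halt⟩ := hp
    by_cases h0 : p.length = 0
    · have hxy : x = y := by
        cases p with
        | nil => rfl
        | cons h q => simp at h0
      exact hyX (hxy ▸ hx)
    · exact key p hpath (Nat.pos_of_ne_zero h0) halt
end

section
/- Let G be a factorizable graph, M a perfect matching of G, and X ⊆ V(G) an odd-maximal barrier of G. Then for any u ∈ X and v ∈ X ∪ C_X, there is no M-saturated path between u and v. -/
open SimpleGraph

section Aux

variable {V : Type*} {G : SimpleGraph V}

lemma key (M : SimpleGraph.Subgraph G) (hM : M.IsPerfectMatching) :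
    ∀ (n : ℕ) {u v : V} (p : G.Walk u v), p.length = n → p.IsPath → Odd p.length →
    IsAltList M.edgeSet p.edges →
    ∃ M' : SimpleGraph.Subgraph G, M'.verts = {x | x ≠ u ∧ x ≠ v} ∧ M'.IsMatching ∧
      ∀ x y, x ∉ p.support → (M'.Adj x y ↔ M.Adj x y) := by
  have Muniq : ∀ x y z : V, M.Adj x y → M.Adj x z → y = z := by
    intro x y z hy hz
    obtain ⟨w, -, hw⟩ := hM.1 (hM.2 x)
    rw [hw y hy, hw z hz]
  intro n
  induction n using Nat.strong_induction_on with
  | _ n IH =>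
    intro u v p hlen hp hodd halt
    match p with
    | SimpleGraph.Walk.nil => simp at hodd
    | SimpleGraph.Walk.cons h SimpleGraph.Walk.nil =>
      -- base case: single edge u-v, in M
      have huv : M.Adj u v := by
        have := halt 0 (by simp)
        simp at this
        exact this
      refine ⟨⟨{x | x ≠ u ∧ x ≠ v}, fun x y => M.Adj x y ∧ s(x, y) ≠ s(u, v), ?_, ?_, ?_⟩, rfl, ?_, ?_⟩
      · rintro x y ⟨hxy, -⟩; exact hxy.adj_sub
      · rintro x y ⟨hxy, hne⟩
        constructor
        · rintro rfl
          have := Muniq x v y huv hxy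
          exact hne (by rw [this])
        · rintro rfl
          have := Muniq x u y huv.symm hxy
          exact hne (by rw [this, Sym2.eq_swap])
      · constructor; rintro x y ⟨hxy, hne⟩; exact ⟨hxy.symm, by rwa [Sym2.eq_swap]⟩
      · rintro x ⟨hxu, hxv⟩
        obtain ⟨y, hy, hyu⟩ := hM.1 (hM.2 x)
        refine ⟨y, ⟨hy, ?_⟩, ?_⟩
        · intro hc
          rw [Sym2.eq_iff] at hc
          rcases hc with ⟨rfl, rfl⟩ | ⟨rfl, rfl⟩
          · exact hxu rfl
          · exact hxv rfl
        · rintro z ⟨hz, -⟩; exact hyu z hz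
      · intro x y hx
        have hx1 : x ≠ u := fun hc => hx (by simp [hc])
        have hx2 : x ≠ v := fun hc => hx (by simp [hc])
        constructor
        · rintro ⟨hxy, -⟩; exact hxy
        · intro hxy
          refine ⟨hxy, ?_⟩
          intro hc
          rw [Sym2.eq_iff] at hc
          rcases hc with ⟨rfl, rfl⟩ | ⟨rfl, rfl⟩
          · exact hx1 rfl
          · exact hx2 rfl
    | @SimpleGraph.Walk.cons _ _ _ a _ h (@SimpleGraph.Walk.cons _ _ _ b _ h' r) =>
      have hlen2 : n = r.length + 2 := by simp [SimpleGraph.Walk.length_cons] at hlen; omega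
      have hrodd : Odd r.length := by
        simp only [SimpleGraph.Walk.length_cons] at hodd
        rcases hodd with ⟨k, hk⟩
        exact ⟨k - 1, by omega⟩
      have hnd := hp.support_nodup
      simp only [SimpleGraph.Walk.support_cons, List.nodup_cons, List.mem_cons] at hnd
      have hur : u ∉ r.support := fun hc => hnd.1 (Or.inr hc)
      have har : a ∉ r.support := hnd.2.1
      have hr : r.IsPath := hp.of_cons.of_cons
      have hau : a ≠ u := h.ne'
      have hab : a ≠ b := h'.ne
      have hbu : b ≠ u := fun hc => hur (hc ▸ r.start_mem_support)
      have hav : a ≠ v := fun hc => har (hc ▸ r.end_mem_support)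
      have huv : u ≠ v := fun hc => hur (hc ▸ r.end_mem_support)
      have hbv : b ≠ v := by
        rintro rfl
        rw [(SimpleGraph.Walk.isPath_iff_eq_nil).mp hr] at hrodd
        simp at hrodd
      have hMua : M.Adj u a := by
        have := halt 0 (by simp)
        simp only [SimpleGraph.Walk.edges_cons, List.get_eq_getElem, List.getElem_cons_zero,
          SimpleGraph.Subgraph.mem_edgeSet] at this
        exact this.mpr Even.zero
      have hnab : ¬ M.Adj a b := by
        have := halt 1 (by simp)
        simp only [SimpleGraph.Walk.edges_cons, List.get_eq_getElem, List.getElem_cons_succ,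
          List.getElem_cons_zero, SimpleGraph.Subgraph.mem_edgeSet] at this
        intro hc
        exact (by decide : ¬ Even 1) (this.mp hc)
      have haltr : IsAltList M.edgeSet r.edges := by
        intro i hi
        have hi2 : i + 2 < (SimpleGraph.Walk.cons h (SimpleGraph.Walk.cons h' r)).edges.length := by
          simp only [SimpleGraph.Walk.edges_cons, List.length_cons]
          omega
        have := halt (i + 2) hi2
        simp only [SimpleGraph.Walk.edges_cons, List.get_eq_getElem,
          List.getElem_cons_succ] at this
        rw [List.get_eq_getElem, this]
        rw [Nat.even_iff, Nat.even_iff]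
        omega
      obtain ⟨M'', h1, h2, h3⟩ := IH r.length (by omega) r rfl hr hrodd haltr
      have hM''ua : M''.Adj u a := (h3 u a hur).mpr hMua
      have M''uniq : ∀ x y z : V, M''.Adj x y → M''.Adj x z → y = z := by
        intro x y z hy hz
        obtain ⟨w, -, hw⟩ := h2 hy.fst_mem
        rw [hw y hy, hw z hz]
      refine ⟨⟨{x | x ≠ u ∧ x ≠ v}, fun x y => s(x, y) = s(a, b) ∨ (M''.Adj x y ∧ s(x, y) ≠ s(u, a)), ?_, ?_, ?_⟩, rfl, ?_, ?_⟩
      · rintro x y (hc | ⟨hxy, -⟩)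
        · rw [Sym2.eq_iff] at hc
          rcases hc with ⟨rfl, rfl⟩ | ⟨rfl, rfl⟩
          exacts [h', h'.symm]
        · exact hxy.adj_sub
      · rintro x y (hc | ⟨hxy, hne⟩)
        · rw [Sym2.eq_iff] at hc
          rcases hc with ⟨rfl, rfl⟩ | ⟨rfl, rfl⟩
          exacts [⟨hau, hav⟩, ⟨hbu, hbv⟩]
        · have hxm : x ∈ M''.verts := hxy.fst_mem
          rw [h1] at hxm
          refine ⟨?_, hxm.2⟩
          rintro rfl
          have : M.Adj x y := (h3 x y hur).mp hxy
          have := Muniq x a y hMua this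
          exact hne (by rw [this])
      · constructor; rintro x y (hc | ⟨hxy, hne⟩)
        · exact Or.inl (by rwa [Sym2.eq_swap])
        · exact Or.inr ⟨hxy.symm, by rwa [Sym2.eq_swap]⟩
      · rintro x ⟨hxu, hxv⟩
        by_cases hxa : x = a
        · subst hxa
          refine ⟨b, Or.inl rfl, ?_⟩
          rintro y (hc | ⟨hy, hne⟩)
          · rw [Sym2.eq_iff] at hc
            rcases hc with ⟨-, rfl⟩ | ⟨hc, -⟩
            · rfl
            · exact absurd hc hab
          · exfalso
            have := M''uniq x y u hy hM''ua.symm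
            subst this
            exact hne (Sym2.eq_swap)
        · by_cases hxb : x = b
          · subst hxb
            refine ⟨a, Or.inl (Sym2.eq_swap), ?_⟩
            rintro y (hc | ⟨hy, hne⟩)
            · rw [Sym2.eq_iff] at hc
              rcases hc with ⟨hc, -⟩ | ⟨-, rfl⟩
              · exact absurd hc (Ne.symm hab)
              · rfl
            · exfalso
              have := hy.fst_mem
              rw [h1] at this
              exact this.1 rfl
          · have hxm : x ∈ M''.verts := by rw [h1]; exact ⟨hxb, hxv⟩
            obtain ⟨y0, hy0, hy0u⟩ := h2 hxm
            refine ⟨y0, Or.inr ⟨hy0, ?_⟩, ?_⟩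
            · intro hc
              rw [Sym2.eq_iff] at hc
              rcases hc with ⟨hc, -⟩ | ⟨hc, -⟩
              exacts [hxu hc, hxa hc]
            · rintro y (hc | ⟨hy, -⟩)
              · exfalso
                rw [Sym2.eq_iff] at hc
                rcases hc with ⟨hc, -⟩ | ⟨hc, -⟩
                exacts [hxa hc, hxb hc]
              · exact hy0u y hy
      · intro x y hx
        simp only [SimpleGraph.Walk.support_cons, List.mem_cons] at hx
        push_neg at hx
        obtain ⟨hxu, hxa, hxr⟩ := hx
        constructor
        · rintro (hc | ⟨hxy, -⟩)
          · exfalso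
            rw [Sym2.eq_iff] at hc
            rcases hc with ⟨hc, -⟩ | ⟨hc, -⟩
            · exact hxa hc
            · exact hxr (hc ▸ r.start_mem_support)
          · exact (h3 x y hxr).mp hxy
        · intro hxy
          refine Or.inr ⟨(h3 x y hxr).mpr hxy, ?_⟩
          intro hc
          rw [Sym2.eq_iff] at hc
          rcases hc with ⟨hc, -⟩ | ⟨hc, -⟩
          exacts [hxu hc, hxa hc]

lemma count {V : Type*} [Fintype V] (G : SimpleGraph V) (X : Set V)
    (hbar : qG G X = X.ncard) (u v : V) (hu : u ∈ X) (hv : v ∈ X ∪ CX G X)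
    (M' : SimpleGraph.Subgraph G) (h1 : M'.verts = {x | x ≠ u ∧ x ≠ v})
    (h2 : M'.IsMatching) : False := by
  classical
  set OC := {c : (G.induce Xᶜ).ConnectedComponent | Odd c.supp.ncard} with hOC
  have M'uniq : ∀ x y z : V, M'.Adj x y → M'.Adj x z → y = z := by
    intro x y z hy hz
    obtain ⟨w, -, hw⟩ := h2 hy.fst_mem
    rw [hw y hy, hw z hz]
  have hvnot : ∀ hvx : v ∈ Xᶜ,
      ¬ Odd ((G.induce Xᶜ).connectedComponentMk ⟨v, hvx⟩).supp.ncard := by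
    intro hvx ho
    rcases hv with hv | hv
    · exact hvx hv
    · exact hv (Or.inr ⟨hvx, ho⟩)
  have hcross : ∀ c ∈ OC, ∃ y, y ∈ X ∧ ∃ (x : V) (hx : x ∈ Xᶜ),
      (⟨x, hx⟩ : ↥(Xᶜ)) ∈ c.supp ∧ M'.Adj x y := by
    intro c hc
    by_contra hno
    push_neg at hno
    set Vc : Set V := Subtype.val '' c.supp with hVc
    have hVcmem : ∀ x ∈ Vc, x ∈ M'.verts := by
      rintro x ⟨⟨x, hx⟩, hxs, rfl⟩
      have hmk := (SimpleGraph.ConnectedComponent.mem_supp_iff _ _).mp hxs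
      rw [h1]
      refine ⟨?_, ?_⟩
      · rintro rfl; exact hx hu
      · rintro rfl
        exact hvnot hx (by rw [hmk]; exact hc)
    have hclosed : ∀ (x : V) (hx : x ∈ Xᶜ), (⟨x, hx⟩ : ↥(Xᶜ)) ∈ c.supp →
        ∀ y, M'.Adj x y → ∃ hy : y ∈ Xᶜ, (⟨y, hy⟩ : ↥(Xᶜ)) ∈ c.supp := by
      intro x hx hxs y hxy
      have hyX : y ∉ X := fun hyX => hno y hyX x hx hxs hxy
      refine ⟨hyX, ?_⟩
      have hadj : (G.induce Xᶜ).Adj ⟨x, hx⟩ ⟨y, hyX⟩ := by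
        simpa using hxy.adj_sub
      rw [SimpleGraph.ConnectedComponent.mem_supp_iff] at hxs ⊢
      exact (SimpleGraph.ConnectedComponent.sound hadj.reachable).symm.trans hxs
    let N : SimpleGraph.Subgraph G :=
      { verts := Vc
        Adj := fun x y => M'.Adj x y ∧ x ∈ Vc ∧ y ∈ Vc
        adj_sub := fun h => h.1.adj_sub
        edge_vert := fun h => h.2.1
        symm := ⟨fun x y ⟨hxy, hx, hy⟩ => ⟨hxy.symm, hy, hx⟩⟩ }
    have hNmatch : N.IsMatching := by
      rintro x hx
      obtain ⟨y0, hy0, hy0u⟩ := h2 (hVcmem x hx)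
      obtain ⟨⟨x', hx'⟩, hxs, rfl⟩ := hx
      obtain ⟨hy, hys⟩ := hclosed x' hx' hxs y0 hy0
      refine ⟨y0, ⟨hy0, ⟨⟨x', hx'⟩, hxs, rfl⟩, ⟨⟨y0, hy⟩, hys, rfl⟩⟩, ?_⟩
      rintro y ⟨hy', -⟩
      exact hy0u y hy'
    haveI : Fintype ↥(N.verts) := Fintype.ofFinite _
    have heven : Even Vc.ncard := by
      have := hNmatch.even_card
      rwa [Set.ncard_eq_toFinset_card']
    have hoddc : Odd Vc.ncard := by
      rw [hVc, Set.ncard_image_of_injective _ Subtype.val_injective]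
      exact hc
    exact (Nat.not_odd_iff_even.mpr heven) hoddc
  let F : (G.induce Xᶜ).ConnectedComponent → V := fun c =>
    if hc : c ∈ OC then (hcross c hc).choose else u
  have hFspec : ∀ c (hc : c ∈ OC), F c ∈ X ∧ ∃ (x : V) (hx : x ∈ Xᶜ),
      (⟨x, hx⟩ : ↥(Xᶜ)) ∈ c.supp ∧ M'.Adj x (F c) := by
    intro c hc
    simp only [F, dif_pos hc]
    exact (hcross c hc).choose_spec
  have hinj : Set.InjOn F OC := by
    intro c1 hc1 c2 hc2 heq
    obtain ⟨-, x1, hx1, hs1, ha1⟩ := hFspec c1 hc1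
    obtain ⟨-, x2, hx2, hs2, ha2⟩ := hFspec c2 hc2
    rw [heq] at ha1
    have hx12 : x1 = x2 := M'uniq (F c2) x1 x2 ha1.symm ha2.symm
    rw [SimpleGraph.ConnectedComponent.mem_supp_iff] at hs1 hs2
    rw [← hs1, ← hs2]
    congr 1
    exact Subtype.ext hx12
  have himg : F '' OC ⊆ X \ {u} := by
    rintro y ⟨c, hc, rfl⟩
    obtain ⟨hX1, x, hx, -, ha⟩ := hFspec c hc
    have := ha.snd_mem
    rw [h1] at this
    exact ⟨hX1, this.1⟩
  have hle : X.ncard ≤ (X \ {u}).ncard := by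
    calc X.ncard = OC.ncard := hbar.symm
      _ = (F '' OC).ncard := (Set.ncard_image_of_injOn hinj).symm
      _ ≤ (X \ {u}).ncard := Set.ncard_le_ncard himg (Set.toFinite _)
  have hlt : (X \ {u}).ncard < X.ncard :=
    Set.ncard_diff_singleton_lt_of_mem hu (Set.toFinite _)
  omega

end Aux

theorem stmt17 {V : Type*} [Fintype V] (G : SimpleGraph V)
    (M : SimpleGraph.Subgraph G) (hM : M.IsPerfectMatching)
    (X : Set V) (hX : IsOddMaximalBarrier G X)
    (u v : V) (hu : u ∈ X) (hv : v ∈ X ∪ CX G X) :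
    ∀ p : G.Walk u v, ¬ IsSaturatedPath M.edgeSet p := by
  rintro p ⟨hp, hodd, halt⟩
  obtain ⟨M', h1, h2, -⟩ := key M hM p.length p rfl hp hodd halt
  exact count G X hX.1 u v hu hv M' h1 h2
end

section
/- Let G be a factorizable graph, M a perfect matching of G, and H a factor-component of G. A set S ⊆ V(H) is a member of P_G(H) if and only if S is a maximal subset of V(H) with the property that there is no M-saturated path between any two vertices of S. -/
open SimpleGraph

namespace K18
variable {V : Type*} {G : SimpleGraph V}

section Partner
variable {M : Subgraph G} (hM : M.IsPerfectMatching)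

noncomputable def mp (v : V) : V := (hM.1 (hM.2 v)).choose

lemma mp_adj (v : V) : M.Adj v (mp hM v) := (hM.1 (hM.2 v)).choose_spec.1

lemma mp_eq {v w : V} (h : M.Adj v w) : w = mp hM v :=
  (hM.1 (hM.2 v)).choose_spec.2 w h

lemma mp_invol (v : V) : mp hM (mp hM v) = v :=
  ((hM.1 (hM.2 (mp hM v))).choose_spec.2 v (mp_adj hM v).symm).symm

lemma mp_gadj (v : V) : G.Adj v (mp hM v) := (mp_adj hM v).adj_sub

lemma mp_ne (v : V) : mp hM v ≠ v := by
  intro h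
  have := mp_gadj hM v
  rw [h] at this
  exact G.loopless.irrefl v this

lemma mp_mem_edge (v : V) : s(v, mp hM v) ∈ M.edgeSet := (mp_adj hM v)

lemma mem_edge_iff {a b : V} : s(a, b) ∈ M.edgeSet ↔ b = mp hM a := by
  constructor
  · intro h; exact mp_eq hM h
  · rintro rfl; exact mp_mem_edge hM a

end Partner

section Lists

/-- edges of the vertex list alternate: edge `i` is in `F` iff `i` even. -/
def Alt (F : Set (Sym2 V)) (l : List V) : Prop :=
  ∀ i a b, l[i]? = some a → l[i+1]? = some b → (s(a, b) ∈ F ↔ Even i)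

def GoodL (G : SimpleGraph V) (F : Set (Sym2 V)) (l : List V) : Prop :=
  l.Nodup ∧ l.Chain' G.Adj ∧ Alt F l

/-- saturated path as vertex list (even # of vertices ⇒ odd # of edges). -/
def SatL (G : SimpleGraph V) (F : Set (Sym2 V)) (u v : V) : Prop :=
  ∃ l : List V, GoodL G F l ∧ Even l.length ∧
    l[0]? = some u ∧ l[l.length - 1]? = some v

/-- alternating path starting with an `F`-edge, any parity, with ≥ 1 edge. -/
def StartL (G : SimpleGraph V) (F : Set (Sym2 V)) (u v : V) : Prop :=
  ∃ l : List V, GoodL G F l ∧ 2 ≤ l.length ∧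
    l[0]? = some u ∧ l[l.length - 1]? = some v

lemma chain'_iff_get? {R : V → V → Prop} {l : List V} :
    l.Chain' R ↔ ∀ i a b, l[i]? = some a → l[i+1]? = some b → R a b := by
  rw [List.Chain', List.isChain_iff_getElem]
  constructor
  · intro H i a b ha hb
    obtain ⟨h1, rfl⟩ := List.getElem?_eq_some_iff.mp ha
    obtain ⟨h2, rfl⟩ := List.getElem?_eq_some_iff.mp hb
    have := H i (by omega)
    simpa using this
  · intro H i h
    have := H i (l[i]'(by omega)) (l[i+1]'(by omega))
      (List.getElem?_eq_getElem _) (List.getElem?_eq_getElem _)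
    simpa using this

lemma satL_ne {F : Set (Sym2 V)} {u v : V} (h : SatL G F u v) : u ≠ v := by
  obtain ⟨l, ⟨hnd, _, _⟩, hev, hh, hl⟩ := h
  obtain ⟨h0, rfl⟩ := List.getElem?_eq_some_iff.mp hh
  obtain ⟨h1, rfl⟩ := List.getElem?_eq_some_iff.mp hl
  have h2 : 2 ≤ l.length := by rcases hev with ⟨k, hk⟩; omega
  intro he
  have := (List.Nodup.getElem_inj_iff hnd).mp he
  omega

lemma GoodL.take {F : Set (Sym2 V)} {l : List V} (h : GoodL G F l) (n : ℕ) :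
    GoodL G F (l.take n) := by
  obtain ⟨hnd, hch, halt⟩ := h
  refine ⟨hnd.sublist (List.take_sublist n l), ?_, ?_⟩
  · rw [chain'_iff_get?] at hch ⊢
    intro i a b ha hb
    rw [List.getElem?_take] at ha hb
    split at ha
    · split at hb
      · exact hch i a b ha hb
      · simp at hb
    · simp at ha
  · intro i a b ha hb
    rw [List.getElem?_take] at ha hb
    split at ha
    · split at hb
      · exact halt i a b ha hb
      · simp at hb
    · simp at ha

lemma GoodL.drop {F : Set (Sym2 V)} {l : List V} (h : GoodL G F l) {n : ℕ}
    (hn : Even n) : GoodL G F (l.drop n) := by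
  obtain ⟨hnd, hch, halt⟩ := h
  refine ⟨hnd.sublist (List.drop_sublist n l), ?_, ?_⟩
  · rw [chain'_iff_get?] at hch ⊢
    intro i a b ha hb
    rw [List.getElem?_drop] at ha hb
    exact hch (n + i) a b ha hb
  · intro i a b ha hb
    rw [List.getElem?_drop] at ha hb
    have := halt (n + i) a b ha hb
    rw [this, Nat.even_add]
    rcases hn with ⟨k, hk⟩
    constructor
    · intro hi; exact hi.mp ⟨k, hk⟩
    · intro hi; exact ⟨fun _ => hi, fun _ => ⟨k, hk⟩⟩

lemma satL_symm {F : Set (Sym2 V)} {u v : V} (h : SatL G F u v) : SatL G F v u := by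
  obtain ⟨l, ⟨hnd, hch, halt⟩, hev, hh, hl⟩ := h
  have hlen : l.reverse.length = l.length := List.length_reverse
  have h0 : 0 < l.length := by
    rcases List.getElem?_eq_some_iff.mp hh with ⟨h1, _⟩; omega
  refine ⟨l.reverse, ⟨List.nodup_reverse.mpr hnd, ?_, ?_⟩, by simpa using hev, ?_, ?_⟩
  · rw [List.Chain', List.isChain_reverse]
    exact List.IsChain.imp (fun a b hab => hab.symm) hch
  · intro i a b ha hb
    have hb1 : i + 1 < l.length := by
      rcases List.getElem?_eq_some_iff.mp hb with ⟨h1, _⟩; omega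
    rw [List.getElem?_reverse (by omega)] at ha
    rw [List.getElem?_reverse (by omega)] at hb
    have hkey := halt (l.length - 1 - (i + 1)) b a hb
      (by rw [← ha]; congr 1 <;> omega)
    rw [Sym2.eq_swap, hkey]
    rcases hev with ⟨k, hk⟩
    constructor
    · rintro ⟨m, hm⟩; exact ⟨k - 1 - m, by omega⟩
    · rintro ⟨m, hm⟩; exact ⟨k - 1 - m, by omega⟩
  · rw [List.getElem?_reverse (by omega)]
    simpa using hl
  · rw [hlen, List.getElem?_reverse (by omega)]
    convert hh using 2
    omega

end Lists

section Bridge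
variable {F : Set (Sym2 V)}

lemma edges_eq_zip {u v : V} (p : G.Walk u v) :
    p.edges = p.support.zipWith (fun a b => s(a, b)) p.support.tail := by
  induction p with
  | nil => simp
  | cons h q ih =>
    rw [Walk.edges_cons, Walk.support_cons, ih, List.tail_cons]
    rw [q.support_eq_cons]
    rfl

lemma edges_get? {u v : V} (p : G.Walk u v) {i : ℕ} {a b : V}
    (ha : p.support[i]? = some a) (hb : p.support[i+1]? = some b) :
    p.edges[i]? = some s(a, b) := by
  obtain ⟨h1, rfl⟩ := List.getElem?_eq_some_iff.mp ha
  obtain ⟨h2, rfl⟩ := List.getElem?_eq_some_iff.mp hb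
  rw [edges_eq_zip]
  have hlt : i < (p.support.zipWith (fun a b => s(a, b)) p.support.tail).length := by
    rw [List.length_zipWith]
    simp only [List.length_tail]
    omega
  rw [List.getElem?_eq_getElem hlt]
  congr 1
  rw [List.getElem_zipWith, List.getElem_tail]

lemma support_get0 {u v : V} (p : G.Walk u v) : p.support[0]? = some u := by
  rw [p.support_eq_cons]; simp

lemma support_getLast {u v : V} (p : G.Walk u v) :
    p.support[p.support.length - 1]? = some v := by
  induction p with
  | nil => rfl
  | cons h q ih =>
    rw [Walk.support_cons]
    have h0 : 0 < q.support.length := by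
      rw [Walk.length_support]; omega
    rw [List.getElem?_cons]
    simp only [List.length_cons]
    have : q.support.length + 1 - 1 ≠ 0 := by omega
    rw [if_neg this]
    convert ih using 2 <;> omega

/-- from a walk with `IsSaturatedPath` to a `SatL` list. -/
lemma satL_of_walk {u v : V} (p : G.Walk u v) (hp : IsSaturatedPath F p) :
    SatL G F u v := by
  obtain ⟨hpath, hodd, halt⟩ := hp
  refine ⟨p.support, ⟨(Walk.isPath_def p).mp hpath, p.isChain_adj_support, ?_⟩, ?_, ?_, ?_⟩
  · intro i a b ha hb
    have he := edges_get? p ha hb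
    obtain ⟨h1, heq⟩ := List.getElem?_eq_some_iff.mp he
    have h2 := halt i h1
    rw [List.get_eq_getElem, heq] at h2
    exact h2
  · rw [Walk.length_support]
    rcases hodd with ⟨k, hk⟩
    exact ⟨k + 1, by omega⟩
  · exact support_get0 p
  · exact support_getLast p

def toWalk (G : SimpleGraph V) : (u : V) → (l : List V) → List.Chain G.Adj u l →
    G.Walk u (l.getLastD u)
  | _, [], _ => Walk.nil
  | u, b :: t, h =>
    (Walk.cons (List.chain_cons.mp h).1
      (toWalk G b t (List.chain_cons.mp h).2)).copy rfl (by rw [List.getLastD_cons])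

lemma toWalk_support (u : V) (l : List V) (h : List.Chain G.Adj u l) :
    (toWalk G u l h).support = u :: l := by
  induction l generalizing u with
  | nil => rfl
  | cons b t ih =>
    rw [toWalk, Walk.support_copy, Walk.support_cons]
    exact congrArg _ (ih b _)

/-- from a `SatL` list to a walk with `IsSaturatedPath`. -/
lemma walk_of_satL {u v : V} (h : SatL G F u v) :
    ∃ p : G.Walk u v, IsSaturatedPath F p := by
  obtain ⟨l, ⟨hnd, hch, halt⟩, hev, hh, hl⟩ := h
  obtain ⟨h0, hu⟩ := List.getElem?_eq_some_iff.mp hh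
  obtain ⟨h1, hv⟩ := List.getElem?_eq_some_iff.mp hl
  obtain ⟨t, rfl⟩ : ∃ t, l = u :: t := by
    cases l with
    | nil => simp at h0
    | cons a t =>
      refine ⟨t, ?_⟩
      simp only [List.getElem_cons_zero] at hu
      rw [hu]
  have ht : t ≠ [] := by
    rintro rfl
    rcases hev with ⟨k, hk⟩
    simp at hk
    omega
  have hchain : List.Chain G.Adj u t := hch
  have h2 : (u :: t).getLast? = some v := by
    rw [List.getLast?_eq_getElem?]
    exact hl
  have h3 : t.getLast? = some v := by
    cases t with
    | nil => exact absurd rfl ht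
    | cons b t' => rwa [List.getLast?_cons_cons] at h2
  have hend : t.getLastD u = v := by
    rw [List.getLastD_eq_getLast?, h3]
    rfl
  refine ⟨(toWalk G u t hchain).copy rfl hend, ?_, ?_, ?_⟩
  · rw [Walk.isPath_def, Walk.support_copy, toWalk_support]
    exact hnd
  · have hlen : ((toWalk G u t hchain).copy rfl hend).length + 1 = (u :: t).length := by
      rw [← Walk.length_support, Walk.support_copy, toWalk_support]
    rcases hev with ⟨k, hk⟩
    simp only [List.length_cons] at hlen hk
    exact ⟨k - 1, by omega⟩
  · intro i hi
    set p := (toWalk G u t hchain).copy rfl hend with hp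
    have hS : p.support = u :: t := by
      rw [hp, Walk.support_copy, toWalk_support]
    have hle : p.edges.length = p.length := Walk.length_edges p
    have hls : p.support.length = p.length + 1 := Walk.length_support p
    have hi1 : i + 1 < p.support.length := by omega
    have hi0 : i < p.support.length := by omega
    have he := edges_get? p (List.getElem?_eq_getElem hi0) (List.getElem?_eq_getElem hi1)
    have hg : p.edges.get ⟨i, hi⟩ = s(p.support[i], p.support[i+1]) := by
      rw [List.get_eq_getElem]
      have := List.getElem?_eq_getElem (l := p.edges) hi
      rw [he] at this
      exact (Option.some_injective _ this).symm
    rw [hg]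
    apply halt i
    · rw [← hS]
      exact List.getElem?_eq_getElem hi0
    · rw [← hS]
      exact List.getElem?_eq_getElem hi1

theorem satL_iff {u v : V} :
    SatL G F u v ↔ ∃ p : G.Walk u v, IsSaturatedPath F p :=
  ⟨walk_of_satL, fun ⟨p, hp⟩ => satL_of_walk p hp⟩

end Bridge

section Glue
variable {F : Set (Sym2 V)}

lemma goodL_of_fun (f : ℕ → V) (m : ℕ)
    (hinj : ∀ i1 i2, i1 ≤ m → i2 ≤ m → f i1 = f i2 → i1 = i2)
    (hadj : ∀ i, i + 1 ≤ m → G.Adj (f i) (f (i+1)))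
    (halt : ∀ i, i + 1 ≤ m → (s(f i, f (i+1)) ∈ F ↔ Even i)) :
    GoodL G F ((List.range (m+1)).map f) ∧
    ((List.range (m+1)).map f).length = m + 1 ∧
    ((List.range (m+1)).map f)[0]? = some (f 0) ∧
    ((List.range (m+1)).map f)[((List.range (m+1)).map f).length - 1]? = some (f m) := by
  have hlen : ((List.range (m+1)).map f).length = m + 1 := by simp
  have hget : ∀ i, i < m + 1 → ((List.range (m+1)).map f)[i]? = some (f i) := by
    intro i hi
    rw [List.getElem?_map, List.getElem?_range hi]
    rfl
  refine ⟨⟨?_, ?_, ?_⟩, hlen, hget 0 (by omega), by rw [hlen]; exact hget m (by omega)⟩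
  · rw [List.nodup_iff_injective_getElem]
    intro ⟨i1, hi1⟩ ⟨i2, hi2⟩ hne
    rw [hlen] at hi1 hi2
    simp only [Fin.mk.injEq]
    have e1 := hget i1 hi1
    have e2 := hget i2 hi2
    rw [List.getElem?_eq_getElem (by omega)] at e1 e2
    apply hinj i1 i2 (by omega) (by omega)
    rw [← Option.some_injective _ e1, ← Option.some_injective _ e2]
    exact hne
  · rw [chain'_iff_get?]
    intro i a b ha hb
    have hi1 : i + 1 < m + 1 := by
      rcases List.getElem?_eq_some_iff.mp hb with ⟨h1, _⟩
      omega
    rw [hget i (by omega)] at ha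
    rw [hget (i+1) (by omega)] at hb
    obtain rfl := Option.some_injective _ ha
    obtain rfl := Option.some_injective _ hb
    exact hadj i (by omega)
  · intro i a b ha hb
    have hi1 : i + 1 < m + 1 := by
      rcases List.getElem?_eq_some_iff.mp hb with ⟨h1, _⟩
      omega
    rw [hget i (by omega)] at ha
    rw [hget (i+1) (by omega)] at hb
    obtain rfl := Option.some_injective _ ha
    obtain rfl := Option.some_injective _ hb
    exact halt i (by omega)

lemma goodL_glue {q r : List V} (hq : GoodL G F q)
    (hrn : r.Nodup) (hrc : r.Chain' G.Adj)
    (hralt : ∀ i a b, r[i]? = some a → r[i+1]? = some b → (s(a, b) ∈ F ↔ Odd i))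
    (hqpar : Even (q.length - 1)) (h1 : 1 ≤ q.length) (h1r : 1 ≤ r.length)
    (hj : ∀ a b, q[q.length - 1]? = some a → r[0]? = some b →
      G.Adj a b ∧ s(a, b) ∈ F)
    (hdisj : List.Disjoint q r) :
    GoodL G F (q ++ r) := by
  obtain ⟨hqn, hqc, hqa⟩ := hq
  have hgl : ∀ i, (q ++ r)[i]? = if i < q.length then q[i]? else r[i - q.length]? :=
    fun i => List.getElem?_append
  refine ⟨List.Nodup.append hqn hrn hdisj, ?_, ?_⟩
  · rw [chain'_iff_get?]
    intro i a b ha hb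
    rw [hgl] at ha hb
    split at ha
    · split at hb
      · exact chain'_iff_get?.mp hqc i a b ha hb
      · -- i = q.length - 1, junction
        have hieq : i = q.length - 1 := by omega
        subst hieq
        have : q.length - 1 + 1 - q.length = 0 := by omega
        rw [this] at hb
        exact (hj a b ha hb).1
    · split at hb
      · omega
      · have h2 : i + 1 - q.length = (i - q.length) + 1 := by omega
        rw [h2] at hb
        exact chain'_iff_get?.mp hrc (i - q.length) a b ha hb
  · intro i a b ha hb
    rw [hgl] at ha hb
    split at ha
    · split at hb
      · exact hqa i a b ha hb
      · have hieq : i = q.length - 1 := by omega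
        subst hieq
        have : q.length - 1 + 1 - q.length = 0 := by omega
        rw [this] at hb
        rcases hqpar with ⟨c, hc⟩
        exact iff_of_true (hj a b ha hb).2 ⟨c, by omega⟩
    · split at hb
      · omega
      · have h2 : i + 1 - q.length = (i - q.length) + 1 := by omega
        rw [h2] at hb
        rw [hralt (i - q.length) a b ha hb]
        rcases hqpar with ⟨c, hc⟩
        have hzq : q.length = 2*c + 1 := by omega
        constructor
        · rintro ⟨d, hd⟩
          exact ⟨c + d + 1, by omega⟩
        · rintro ⟨d, hd⟩
          exact ⟨d - c - 1, by omega⟩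

lemma GoodL.snoc {l : List V} (hl : GoodL G F l) {y : V} (h1 : 1 ≤ l.length)
    (hadj : ∀ a, l[l.length - 1]? = some a → G.Adj a y)
    (hnm : y ∉ l)
    (hiff : ∀ a, l[l.length - 1]? = some a → (s(a, y) ∈ F ↔ Even (l.length - 1))) :
    GoodL G F (l ++ [y]) := by
  obtain ⟨hn, hc, ha⟩ := hl
  have hgl : ∀ i, (l ++ [y])[i]? = if i < l.length then l[i]? else [y][i - l.length]? :=
    fun i => List.getElem?_append
  refine ⟨?_, ?_, ?_⟩
  · rw [List.nodup_append]
    refine ⟨hn, List.nodup_singleton y, ?_⟩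
    intro a hal b hay
    rw [List.mem_singleton] at hay
    subst hay
    rintro rfl
    exact hnm hal
  · rw [chain'_iff_get?]
    intro i a b hia hib
    rw [hgl] at hia hib
    split at hia
    · split at hib
      · exact chain'_iff_get?.mp hc i a b hia hib
      · have hieq : i = l.length - 1 := by omega
        have : i + 1 - l.length = 0 := by omega
        rw [this] at hib
        simp only [List.getElem?_cons_zero] at hib
        obtain rfl := Option.some_injective _ hib
        exact hadj a (hieq ▸ hia)
    · split at hib
      · omega
      · have : i + 1 - l.length = i - l.length + 1 := by omega
        rw [this] at hib
        simp at hib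
  · intro i a b hia hib
    rw [hgl] at hia hib
    split at hia
    · split at hib
      · exact ha i a b hia hib
      · have hieq : i = l.length - 1 := by omega
        have : i + 1 - l.length = 0 := by omega
        rw [this] at hib
        simp only [List.getElem?_cons_zero] at hib
        obtain rfl := Option.some_injective _ hib
        rw [hiff a (hieq ▸ hia), hieq]
    · split at hib
      · omega
      · have : i + 1 - l.length = i - l.length + 1 := by omega
        rw [this] at hib
        simp at hib

end Glue

section Engine

def eseq (σ τ : V → V) (a : V) : ℕ → V
  | 0 => a
  | k + 1 => if Even k then σ (eseq σ τ a k) else τ (eseq σ τ a k)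

variable {σ τ : V → V} {a : V}

lemma eseq_zero : eseq σ τ a 0 = a := rfl

lemma eseq_succ_even (k : ℕ) (h : Even k) :
    eseq σ τ a (k+1) = σ (eseq σ τ a k) := by rw [eseq, if_pos h]

lemma eseq_succ_odd (k : ℕ) (h : ¬ Even k) :
    eseq σ τ a (k+1) = τ (eseq σ τ a k) := by rw [eseq, if_neg h]

lemma eseq_min_repeat (hσ : ∀ x, σ (σ x) = x) (hσne : ∀ x, σ x ≠ x)
    (hτ : ∀ x, τ (τ x) = x)
    {j k : ℕ} (hjk : j < k) (heq : eseq σ τ a j = eseq σ τ a k)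
    (hmin : ∀ i1 i2, i1 < i2 → i2 < k → eseq σ τ a i1 ≠ eseq σ τ a i2) :
    (∃ i, i < k ∧ ¬ Even i ∧ τ (eseq σ τ a i) = eseq σ τ a i) ∨
    (j = 0 ∧ ¬ Even (k-1) ∧ eseq σ τ a (k-1) = τ a) := by
  obtain ⟨m, rfl⟩ : ∃ m, k = m + 1 := ⟨k-1, by omega⟩
  by_cases hm : Even m
  · exfalso
    have h1 : eseq σ τ a (m+1) = σ (eseq σ τ a m) := eseq_succ_even m hm
    have h2 : eseq σ τ a m = σ (eseq σ τ a j) := by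
      rw [heq, h1, hσ]
    by_cases hj : Even j
    · have h3 : eseq σ τ a (j+1) = eseq σ τ a m := by
        rw [eseq_succ_even j hj, ← h2]
      rcases lt_trichotomy (j+1) m with hlt | heqm | hgt
      · exact hmin (j+1) m hlt (by omega) h3
      · rcases hj with ⟨c, hc⟩; rcases hm with ⟨d, hd⟩; omega
      · have hjm : j = m := by omega
        subst hjm
        exact hσne _ h2.symm
    · have hj1 : 1 ≤ j := by
        rcases Nat.eq_zero_or_pos j with rfl | h
        · exact absurd (Even.zero) hj
        · exact h
      have hjpar : Even (j - 1) := by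
        rcases Nat.not_even_iff_odd.mp hj with ⟨c, hc⟩
        exact ⟨c, by omega⟩
      have h4 : eseq σ τ a j = σ (eseq σ τ a (j-1)) := by
        have := eseq_succ_even (σ := σ) (τ := τ) (a := a) (j-1) hjpar
        rwa [show j - 1 + 1 = j by omega] at this
      have h5 : eseq σ τ a m = eseq σ τ a (j-1) := by
        rw [h2, h4, hσ]
      exact hmin (j-1) m (by omega) (by omega) h5.symm
  · have h1 : eseq σ τ a (m+1) = τ (eseq σ τ a m) := eseq_succ_odd m hm
    have h2 : eseq σ τ a m = τ (eseq σ τ a j) := by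
      rw [heq, h1, hτ]
    by_cases hjm : j = m
    · subst hjm
      exact Or.inl ⟨j, by omega, hm, h2.symm⟩
    · have hjm' : j < m := by omega
      by_cases hj : Even j
      · by_cases hj0 : j = 0
        · subst hj0
          refine Or.inr ⟨rfl, ?_, ?_⟩
          · rwa [show m + 1 - 1 = m by omega]
          · rw [show m + 1 - 1 = m by omega, h2, eseq_zero]
        · exfalso
          have hj1 : 1 ≤ j := by omega
          have hjpar : ¬ Even (j - 1) := by
            rcases hj with ⟨c, hc⟩
            rw [Nat.not_even_iff_odd]
            exact ⟨c - 1, by omega⟩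
          have h4 : eseq σ τ a j = τ (eseq σ τ a (j-1)) := by
            have := eseq_succ_odd (σ := σ) (τ := τ) (a := a) (j-1) hjpar
            rwa [show j - 1 + 1 = j by omega] at this
          have h5 : eseq σ τ a m = eseq σ τ a (j-1) := by
            rw [h2, h4, hτ]
          exact hmin (j-1) m (by omega) (by omega) h5.symm
      · exfalso
        have h3 : eseq σ τ a (j+1) = eseq σ τ a m := by
          rw [eseq_succ_odd j hj, ← h2]
        rcases lt_trichotomy (j+1) m with hlt | heqm | hgt
        · exact hmin (j+1) m hlt (by omega) h3
        · rcases Nat.not_even_iff_odd.mp hj with ⟨c, hc⟩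
          rcases Nat.not_even_iff_odd.mp hm with ⟨d, hd⟩
          omega
        · omega

/-- if `f` is not injective on `[0,n]`, there is a minimal repeat. -/
lemma exists_min_repeat (f : ℕ → V) {n : ℕ} {i1 i2 : ℕ}
    (h1 : i1 < i2) (h2 : i2 ≤ n) (heq : f i1 = f i2) :
    ∃ k, k ≤ n ∧ (∃ j, j < k ∧ f j = f k) ∧
      ∀ j1 j2, j1 < j2 → j2 < k → f j1 ≠ f j2 := by
  classical
  have hP : ∃ k, ∃ j, j < k ∧ f j = f k := ⟨i2, i1, h1, heq⟩
  set k0 := Nat.find hP with hk0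
  refine ⟨k0, ?_, Nat.find_spec hP, ?_⟩
  · have := Nat.find_min' hP ⟨i1, h1, heq⟩
    omega
  · intro j1 j2 hj hj2 hfeq
    exact Nat.find_min hP hj2 ⟨j1, hj, hfeq⟩

lemma eseq_exists_repeat [Finite V] (f : ℕ → V) :
    ∃ i j, i < j ∧ f i = f j := by
  obtain ⟨i, j, hne, heq⟩ := Finite.exists_ne_map_eq_of_infinite f
  rcases lt_or_gt_of_ne hne with h | h
  · exact ⟨i, j, h, heq⟩
  · exact ⟨j, i, h, heq.symm⟩

end Engine

section Apps
variable {M : Subgraph G} (hM : M.IsPerfectMatching)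

lemma eseq_to_satL {τ : V → V} {a b : V} {m : ℕ} (hm1 : 1 ≤ m)
    (hfm : eseq (mp hM) τ a m = b)
    (hinj : ∀ i1 i2, i1 ≤ m → i2 ≤ m → eseq (mp hM) τ a i1 = eseq (mp hM) τ a i2 → i1 = i2)
    (hmpar : Even (m - 1))
    (hodd : ∀ i, ¬ Even i → i + 1 ≤ m →
      G.Adj (eseq (mp hM) τ a i) (τ (eseq (mp hM) τ a i)) ∧
      s(eseq (mp hM) τ a i, τ (eseq (mp hM) τ a i)) ∉ M.edgeSet) :
    SatL G M.edgeSet a b := by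
  set f := eseq (mp hM) τ a with hf
  have hadj : ∀ i, i + 1 ≤ m → G.Adj (f i) (f (i+1)) := by
    intro i hi
    by_cases hev : Even i
    · rw [hf, eseq_succ_even i hev]
      exact mp_gadj hM _
    · rw [hf, eseq_succ_odd i hev]
      exact (hodd i hev hi).1
  have halt : ∀ i, i + 1 ≤ m → (s(f i, f (i+1)) ∈ M.edgeSet ↔ Even i) := by
    intro i hi
    by_cases hev : Even i
    · rw [hf, eseq_succ_even i hev]
      exact iff_of_true (mp_mem_edge hM _) hev
    · rw [hf, eseq_succ_odd i hev]
      exact iff_of_false (hodd i hev hi).2 hev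
  obtain ⟨hgood, hlen, h0, hl⟩ := goodL_of_fun (G := G) (F := M.edgeSet) f m hinj hadj halt
  refine ⟨(List.range (m+1)).map f, hgood, ?_, ?_, ?_⟩
  · rw [hlen]
    rcases hmpar with ⟨c, hc⟩
    exact ⟨c + 1, by omega⟩
  · rw [h0, hf, eseq_zero]
  · rw [hl, hfm]

include hM in
theorem satL_of_factorizable [Fintype V] {u v : V} (huv : u ≠ v)
    (hfac : Factorizable (G.induce {w : V | w ≠ u ∧ w ≠ v})) :
    SatL G M.edgeSet u v := by
  classical
  obtain ⟨Fm, hFm⟩ := hfac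
  set sset : Set V := {w : V | w ≠ u ∧ w ≠ v} with hsset
  set τ : V → V := fun x => if h : x ≠ u ∧ x ≠ v then (mp hFm ⟨x, h⟩).1 else x with hτdef
  have hτs : ∀ (x : V) (h : x ≠ u ∧ x ≠ v), τ x = (mp hFm ⟨x, h⟩).1 := by
    intro x h; rw [hτdef]; simp only [dif_pos h]
  have hτn : ∀ (x : V), ¬ (x ≠ u ∧ x ≠ v) → τ x = x := by
    intro x h; rw [hτdef]; simp only [dif_neg h]
  have hmem : ∀ (y : ↥sset), (y : V) ≠ u ∧ (y : V) ≠ v := fun y => y.2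
  have hτ : ∀ x, τ (τ x) = x := by
    intro x
    by_cases h : x ≠ u ∧ x ≠ v
    · rw [hτs x h, hτs _ (hmem _)]
      have : (⟨(mp hFm ⟨x, h⟩).1, hmem _⟩ : ↥sset) = mp hFm ⟨x, h⟩ := Subtype.ext rfl
      rw [this, mp_invol hFm]
    · rw [hτn x h, hτn x h]
  have hτmove : ∀ (x : V) (h : x ≠ u ∧ x ≠ v), τ x ≠ x := by
    intro x h heq
    rw [hτs x h] at heq
    exact mp_ne hFm ⟨x, h⟩ (Subtype.ext heq)
  have hτadj : ∀ (x : V) (h : x ≠ u ∧ x ≠ v), G.Adj x (τ x) := by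
    intro x h
    rw [hτs x h]
    exact mp_gadj hFm ⟨x, h⟩
  have hτin : ∀ (x : V) (h : x ≠ u ∧ x ≠ v), τ x ≠ u ∧ τ x ≠ v := by
    intro x h
    rw [hτs x h]
    exact hmem _
  set f := eseq (mp hM) τ u with hf
  have hσi := mp_invol hM
  have hσne : ∀ x, mp hM x ≠ x := mp_ne hM
  have hf0 : f 0 = u := rfl
  -- claim: f hits v
  have htarget : ∃ n, f n = v := by
    by_contra hno
    push_neg at hno
    have hinj : ∀ i j, i < j → f i ≠ f j := by
      intro i j hij heq
      obtain ⟨k, _, ⟨j0, hj0k, heqk⟩, hmin⟩ := exists_min_repeat f hij le_rfl heq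
      rcases eseq_min_repeat hσi hσne hτ hj0k heqk hmin with
        ⟨i0, hi0k, hi0odd, hfix⟩ | ⟨_, hoddk, hlast⟩
      · by_cases hx : f i0 ≠ u ∧ f i0 ≠ v
        · exact hτmove _ hx hfix
        · push_neg at hx
          by_cases hxu : f i0 = u
          · have hi01 : 1 ≤ i0 := by
              rcases Nat.eq_zero_or_pos i0 with rfl | h
              · exact absurd Even.zero hi0odd
              · exact h
            exact hmin 0 i0 (by omega) hi0k (by rw [hf0, hxu])
          · exact hno i0 (hx hxu)
      · have h1 : τ u = u := hτn u (by simp)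
        have hk1 : 1 ≤ k - 1 := by
          rcases Nat.eq_zero_or_pos (k-1) with he | h
          · rw [he] at hoddk; exact absurd Even.zero hoddk
          · exact h
        exact hmin 0 (k-1) (by omega) (by omega) (by rw [hf0, hf, hlast, h1])
    obtain ⟨i, j, hij, heq⟩ := eseq_exists_repeat f
    exact hinj i j hij heq
  set m := Nat.find htarget with hmdef
  have hfm : f m = v := Nat.find_spec htarget
  have hmmin : ∀ i, i < m → f i ≠ v := fun i hi => Nat.find_min htarget hi
  have hm1 : 1 ≤ m := by
    rcases Nat.eq_zero_or_pos m with he | h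
    · rw [he] at hfm; rw [hf0] at hfm; exact absurd hfm huv
    · exact h
  have hinj : ∀ i1 i2, i1 ≤ m → i2 ≤ m → f i1 = f i2 → i1 = i2 := by
    intro i1 i2 hle1 hle2 heq12
    by_contra hne
    have hkey : ∀ i j, i < j → j ≤ m → f i = f j → False := by
      intro i j hij hjm heq
      obtain ⟨k, hkm, ⟨j0, hj0k, heqk⟩, hmin⟩ := exists_min_repeat f hij hjm heq
      rcases eseq_min_repeat hσi hσne hτ hj0k heqk hmin with
        ⟨i0, hi0k, hi0odd, hfix⟩ | ⟨_, hoddk, hlast⟩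
      · by_cases hx : f i0 ≠ u ∧ f i0 ≠ v
        · exact hτmove _ hx hfix
        · push_neg at hx
          by_cases hxu : f i0 = u
          · have hi01 : 1 ≤ i0 := by
              rcases Nat.eq_zero_or_pos i0 with rfl | h
              · exact absurd Even.zero hi0odd
              · exact h
            exact hmin 0 i0 (by omega) hi0k (by rw [hf0, hxu])
          · exact hmmin i0 (by omega) (hx hxu)
      · have h1 : τ u = u := hτn u (by simp)
        have hk1 : 1 ≤ k - 1 := by
          rcases Nat.eq_zero_or_pos (k-1) with he | h
          · rw [he] at hoddk; exact absurd Even.zero hoddk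
          · exact h
        exact hmin 0 (k-1) (by omega) (by omega) (by rw [hf0, hf, hlast, h1])
    rcases lt_trichotomy i1 i2 with h | h | h
    · exact hkey i1 i2 h hle2 heq12
    · exact hne h
    · exact hkey i2 i1 h hle1 heq12.symm
  have hmpar : Even (m - 1) := by
    by_contra hop
    have hstep : f m = τ (f (m-1)) := by
      have := eseq_succ_odd (σ := mp hM) (τ := τ) (a := u) (m-1) hop
      rwa [show m - 1 + 1 = m by omega] at this
    by_cases hx : f (m-1) ≠ u ∧ f (m-1) ≠ v
    · have := hτin _ hx
      rw [← hstep, hfm] at this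
      exact this.2 rfl
    · have h1 : τ (f (m-1)) = f (m-1) := hτn _ hx
      rw [h1] at hstep
      exact hmmin (m-1) (by omega) (by rw [← hstep, hfm])
  have hodd : ∀ i, ¬ Even i → i + 1 ≤ m →
      G.Adj (f i) (τ (f i)) ∧ s(f i, τ (f i)) ∉ M.edgeSet := by
    intro i hiodd him
    have hi1 : 1 ≤ i := by
      rcases Nat.eq_zero_or_pos i with rfl | h
      · exact absurd Even.zero hiodd
      · exact h
    have hx : f i ≠ u ∧ f i ≠ v := by
      constructor
      · intro hxu
        have := hinj 0 i (by omega) (by omega) (by rw [hf0, hxu])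
        omega
      · exact hmmin i (by omega)
    refine ⟨hτadj _ hx, ?_⟩
    intro hmem'
    have h2 : τ (f i) = mp hM (f i) := mp_eq hM (Subgraph.mem_edgeSet.mp hmem')
    have h3 : f i = mp hM (f (i-1)) := by
      have := eseq_succ_even (σ := mp hM) (τ := τ) (a := u) (i-1)
        (by rcases Nat.not_even_iff_odd.mp hiodd with ⟨c, hc⟩; exact ⟨c, by omega⟩)
      rwa [show i - 1 + 1 = i by omega] at this
    have h4 : f (i+1) = f (i-1) := by
      rw [hf, eseq_succ_odd i hiodd, ← hf, h2, h3, hσi]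
    have := hinj (i-1) (i+1) (by omega) (by omega) h4.symm
    omega
  exact eseq_to_satL hM hm1 hfm hinj hmpar hodd


theorem satL_two {x y : V} (hG : G.Adj x y) (hin : s(x, y) ∈ M.edgeSet) :
    SatL G M.edgeSet x y := by
  refine ⟨[x, y], ⟨?_, ?_, ?_⟩, by simp, by simp, by simp⟩
  · simp [hG.ne]
  · exact List.isChain_pair.mpr hG
  · intro i a b ha hb
    match i with
    | 0 =>
      simp only [List.getElem?_cons_zero] at ha
      simp only [List.getElem?_cons_succ, List.getElem?_cons_zero] at hb
      obtain rfl := Option.some_injective _ ha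
      obtain rfl := Option.some_injective _ hb
      exact iff_of_true hin Even.zero
    | n + 1 =>
      simp at hb

include hM in
theorem satL_of_allowed [Fintype V] {x y : V} (hall : Allowed G s(x, y))
    (hG : G.Adj x y) : SatL G M.edgeSet x y := by
  classical
  by_cases hin : s(x, y) ∈ M.edgeSet
  · exact satL_two hG hin
  obtain ⟨N, hN, hmem⟩ := hall
  set τ : V → V := mp hN with hτdef
  have hτxy : τ x = y := (mp_eq hN (Subgraph.mem_edgeSet.mp hmem)).symm
  have hτ : ∀ z, τ (τ z) = z := mp_invol hN
  have hτne : ∀ z, τ z ≠ z := mp_ne hN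
  set f := eseq (mp hM) τ x with hf
  have hσi := mp_invol hM
  have hσne : ∀ z, mp hM z ≠ z := mp_ne hM
  have hf0 : f 0 = x := rfl
  have hxy : x ≠ y := hG.ne
  have htarget : ∃ n, f n = y := by
    by_contra hno
    push_neg at hno
    have hinj : ∀ i j, i < j → f i ≠ f j := by
      intro i j hij heq
      obtain ⟨k, _, ⟨j0, hj0k, heqk⟩, hmin⟩ := exists_min_repeat f hij le_rfl heq
      rcases eseq_min_repeat hσi hσne hτ hj0k heqk hmin with
        ⟨i0, hi0k, hi0odd, hfix⟩ | ⟨_, hoddk, hlast⟩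
      · exact hτne _ hfix
      · rw [hτxy] at hlast
        exact hno (k-1) hlast
    obtain ⟨i, j, hij, heq⟩ := eseq_exists_repeat f
    exact hinj i j hij heq
  set m := Nat.find htarget with hmdef
  have hfm : f m = y := Nat.find_spec htarget
  have hmmin : ∀ i, i < m → f i ≠ y := fun i hi => Nat.find_min htarget hi
  have hm1 : 1 ≤ m := by
    rcases Nat.eq_zero_or_pos m with he | h
    · rw [he] at hfm; rw [hf0] at hfm; exact absurd hfm hxy
    · exact h
  have hinj : ∀ i1 i2, i1 ≤ m → i2 ≤ m → f i1 = f i2 → i1 = i2 := by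
    intro i1 i2 hle1 hle2 heq12
    by_contra hne
    have hkey : ∀ i j, i < j → j ≤ m → f i = f j → False := by
      intro i j hij hjm heq
      obtain ⟨k, hkm, ⟨j0, hj0k, heqk⟩, hmin⟩ := exists_min_repeat f hij hjm heq
      rcases eseq_min_repeat hσi hσne hτ hj0k heqk hmin with
        ⟨i0, hi0k, hi0odd, hfix⟩ | ⟨_, hoddk, hlast⟩
      · exact hτne _ hfix
      · rw [hτxy] at hlast
        exact hmmin (k-1) (by omega) hlast
    rcases lt_trichotomy i1 i2 with h | h | h
    · exact hkey i1 i2 h hle2 heq12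
    · exact hne h
    · exact hkey i2 i1 h hle1 heq12.symm
  have hmpar : Even (m - 1) := by
    by_contra hop
    have hstep : f m = τ (f (m-1)) := by
      have := eseq_succ_odd (σ := mp hM) (τ := τ) (a := x) (m-1) hop
      rwa [show m - 1 + 1 = m by omega] at this
    have h2 : f (m-1) = x := by
      have : τ (f m) = f (m-1) := by rw [hstep, hτ]
      rw [hfm] at this
      rw [← this, ← hτxy, hτ]
    have := hinj 0 (m-1) (by omega) (by omega) (by rw [hf0, h2])
    have hm2 : 1 ≤ m - 1 := by
      rcases Nat.eq_zero_or_pos (m-1) with he | h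
      · rw [he] at hop; exact absurd Even.zero hop
      · exact h
    omega
  have hodd : ∀ i, ¬ Even i → i + 1 ≤ m →
      G.Adj (f i) (τ (f i)) ∧ s(f i, τ (f i)) ∉ M.edgeSet := by
    intro i hiodd him
    have hi1 : 1 ≤ i := by
      rcases Nat.eq_zero_or_pos i with rfl | h
      · exact absurd Even.zero hiodd
      · exact h
    refine ⟨mp_gadj hN _, ?_⟩
    intro hmem'
    have h2 : τ (f i) = mp hM (f i) := mp_eq hM (Subgraph.mem_edgeSet.mp hmem')
    have h3 : f i = mp hM (f (i-1)) := by
      have := eseq_succ_even (σ := mp hM) (τ := τ) (a := x) (i-1)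
        (by rcases Nat.not_even_iff_odd.mp hiodd with ⟨c, hc⟩; exact ⟨c, by omega⟩)
      rwa [show i - 1 + 1 = i by omega] at this
    have h4 : f (i+1) = f (i-1) := by
      rw [hf, eseq_succ_odd i hiodd, ← hf, h2, h3, hσi]
    have := hinj (i-1) (i+1) (by omega) (by omega) h4.symm
    omega
  exact eseq_to_satL hM hm1 hfm hinj hmpar hodd


include hM in
theorem factorizable_of_satL {u v : V} (h : SatL G M.edgeSet u v) :
    Factorizable (G.induce {w : V | w ≠ u ∧ w ≠ v}) := by
  classical
  obtain ⟨l, ⟨hnd, hch, halt⟩, hev, hh, hl⟩ := h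
  obtain ⟨h0, hu⟩ := List.getElem?_eq_some_iff.mp hh
  obtain ⟨h1t, hv⟩ := List.getElem?_eq_some_iff.mp hl
  have hn2 : 2 ≤ l.length := by rcases hev with ⟨k, hk⟩; omega
  have hgetinj : ∀ {i j : ℕ} (hi : i < l.length) (hj : j < l.length),
      l[i] = l[j] → i = j := by
    intro i j hi hj hij
    exact (List.Nodup.getElem_inj_iff hnd).mp hij
  have hidx2 : ∀ t (ht : t < l.length), List.idxOf (l[t]) l = t := by
    intro t ht
    have hmem : l[t] ∈ l := List.getElem_mem ht
    have hlt := List.idxOf_lt_length_iff.mpr hmem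
    exact hgetinj hlt ht (List.getElem_idxOf hlt)
  have hMedge : ∀ t, (ht : t + 1 < l.length) → Even t →
      l[t+1] = mp hM (l[t]'(by omega)) := by
    intro t ht hevt
    have hiff := halt t (l[t]'(by omega)) (l[t+1]'ht)
      (List.getElem?_eq_getElem (by omega)) (List.getElem?_eq_getElem ht)
    exact mp_eq hM (Subgraph.mem_edgeSet.mp (hiff.mpr hevt))
  have hmem_close : ∀ x, x ∈ l → mp hM x ∈ l := by
    intro x hx
    obtain ⟨t, ht, rfl⟩ := List.mem_iff_getElem.mp hx
    by_cases hevt : Even t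
    · have ht1 : t + 1 < l.length := by
        rcases hevt with ⟨c, hc⟩; rcases hev with ⟨k, hk⟩; omega
      rw [← hMedge t ht1 hevt]
      exact List.getElem_mem ht1
    · have ht1 : 1 ≤ t := by
        rcases Nat.eq_zero_or_pos t with rfl | hp
        · exact absurd Even.zero hevt
        · exact hp
      have hevt' : Even (t - 1) := by
        rcases Nat.not_even_iff_odd.mp hevt with ⟨c, hc⟩
        exact ⟨c, by omega⟩
      have hkey := hMedge (t-1) (by omega) hevt'
      have hidxeq : l[t-1+1]'(by omega) = l[t]'ht := by congr 1 <;> omega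
      rw [hidxeq] at hkey
      have : mp hM (l[t]'ht) = l[t-1]'(by omega) := by
        rw [hkey, mp_invol hM]
      rw [this]
      exact List.getElem_mem (by omega)
  set hfun : V → V := fun x =>
    if hx : x ∈ l then
      (if Even (List.idxOf x l) then l.getD (List.idxOf x l - 1) x
       else l.getD (List.idxOf x l + 1) x)
    else mp hM x with hfd
  have hfval_nin : ∀ x, x ∉ l → hfun x = mp hM x := by
    intro x hx
    simp only [hfd]
    rw [dif_neg hx]
  have hfval_even : ∀ t (ht : t < l.length), Even t →
      hfun (l[t]) = l.getD (t - 1) (l[t]'ht) := by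
    intro t ht hevt
    simp only [hfd]
    rw [dif_pos (List.getElem_mem ht), hidx2 t ht, if_pos hevt]
  have hfval_odd : ∀ t (ht : t < l.length), ¬ Even t →
      hfun (l[t]) = l.getD (t + 1) (l[t]'ht) := by
    intro t ht hevt
    simp only [hfd]
    rw [dif_pos (List.getElem_mem ht), hidx2 t ht, if_neg hevt]
  have hgetD : ∀ s (hs : s < l.length) (d : V), l.getD s d = l[s]'hs := by
    intro s hs d
    rw [List.getD_eq_getElem?_getD, List.getElem?_eq_getElem hs]
    rfl
  -- the three properties of hfun on V ∖ {u, v}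
  have hP : ∀ x : V, x ≠ u → x ≠ v →
      (hfun x ≠ u ∧ hfun x ≠ v) ∧ hfun (hfun x) = x ∧ G.Adj x (hfun x) := by
    intro x hxu hxv
    by_cases hx : x ∈ l
    · obtain ⟨t, ht, rfl⟩ := List.mem_iff_getElem.mp hx
      have ht0 : t ≠ 0 := by
        intro hteq
        apply hxu
        rw [← hu]
        congr 1 <;> omega
      have htn : t ≠ l.length - 1 := by
        intro hteq
        apply hxv
        rw [← hv]
        congr 1 <;> omega
      by_cases hevt : Even t
      · have ht2 : 2 ≤ t := by rcases hevt with ⟨c, hc⟩; omega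
        have hfv : hfun (l[t]'ht) = l[t-1]'(by omega) := by
          rw [hfval_even t ht hevt, hgetD]
        have hpar1 : ¬ Even (t - 1) := by
          rcases hevt with ⟨c, hc⟩
          rw [Nat.not_even_iff_odd]
          exact ⟨c - 1, by omega⟩
        refine ⟨⟨?_, ?_⟩, ?_, ?_⟩
        · rw [hfv, ← hu]
          intro heq
          have := hgetinj (by omega) (by omega) heq
          omega
        · rw [hfv, ← hv]
          intro heq
          have := hgetinj (by omega) (by omega) heq
          omega
        · rw [hfv, hfval_odd (t-1) (by omega) hpar1, hgetD _ (by omega)]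
          congr 1 <;> omega
        · rw [hfv]
          have hadj := chain'_iff_get?.mp hch (t-1) (l[t-1]'(by omega)) (l[t-1+1]'(by omega))
            (List.getElem?_eq_getElem (by omega)) (List.getElem?_eq_getElem (by omega))
          have hidxeq : l[t-1+1]'(by omega) = l[t]'ht := by congr 1 <;> omega
          rw [hidxeq] at hadj
          exact hadj.symm
      · have htn1 : t + 1 ≤ l.length - 2 := by
          rcases Nat.not_even_iff_odd.mp hevt with ⟨c, hc⟩
          rcases hev with ⟨k, hk⟩
          omega
        have hfv : hfun (l[t]'ht) = l[t+1]'(by omega) := by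
          rw [hfval_odd t ht hevt, hgetD]
        have hpar1 : Even (t + 1) := by
          rcases Nat.not_even_iff_odd.mp hevt with ⟨c, hc⟩
          exact ⟨c + 1, by omega⟩
        refine ⟨⟨?_, ?_⟩, ?_, ?_⟩
        · rw [hfv, ← hu]
          intro heq
          have := hgetinj (by omega) (by omega) heq
          omega
        · rw [hfv, ← hv]
          intro heq
          have := hgetinj (by omega) (by omega) heq
          omega
        · rw [hfv, hfval_even (t+1) (by omega) hpar1, hgetD _ (by omega)]
          congr 1 <;> omega
        · rw [hfv]
          exact chain'_iff_get?.mp hch t (l[t]'ht) (l[t+1]'(by omega))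
            (List.getElem?_eq_getElem (by omega)) (List.getElem?_eq_getElem (by omega))
    · have hfv := hfval_nin x hx
      have hnin : mp hM x ∉ l := by
        intro hmem
        have := hmem_close _ hmem
        rw [mp_invol hM] at this
        exact hx this
      have humem : u ∈ l := by rw [← hu]; exact List.getElem_mem h0
      have hvmem : v ∈ l := by rw [← hv]; exact List.getElem_mem h1t
      refine ⟨⟨?_, ?_⟩, ?_, ?_⟩
      · rw [hfv]; intro heq; rw [heq] at hnin; exact hnin humem
      · rw [hfv]; intro heq; rw [heq] at hnin; exact hnin hvmem
      · rw [hfv, hfval_nin _ hnin, mp_invol hM]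
      · rw [hfv]; exact mp_gadj hM x
  -- build the perfect matching of G − u − v
  refine ⟨⟨Set.univ,
    fun a b => (b : V) = hfun (a : V) ∨ (a : V) = hfun (b : V), ?_, ?_, ?_⟩, ?_, ?_⟩
  · intro a b hab
    rcases hab with hab | hab
    · have := (hP (a : V) a.2.1 a.2.2).2.2
      rw [← hab] at this
      exact this
    · have := (hP (b : V) b.2.1 b.2.2).2.2
      rw [← hab] at this
      exact this.symm
  · intro a b _
    exact Set.mem_univ a
  · refine ⟨fun a b hab => ?_⟩
    rcases hab with hab | hab
    · exact Or.inr hab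
    · exact Or.inl hab
  · intro a _
    obtain ⟨⟨hu', hv'⟩, hinv, hadj⟩ := hP (a : V) a.2.1 a.2.2
    refine ⟨⟨hfun (a : V), ⟨hu', hv'⟩⟩, Or.inl rfl, ?_⟩
    rintro b (hb | hb)
    · exact Subtype.ext hb
    · apply Subtype.ext
      show (b : V) = hfun (a : V)
      obtain ⟨_, hinvb, _⟩ := hP (b : V) b.2.1 b.2.2
      rw [hb]
      exact hinvb.symm
  · intro a
    exact Set.mem_univ a


include hM in
lemma satlist_mp_even {l : List V} (hgood : GoodL G M.edgeSet l) (hlev : Even l.length)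
    {k : ℕ} (hk : k < l.length) (hke : Even k) :
    ∃ hk1 : k + 1 < l.length, mp hM (l[k]) = l[k+1]'hk1 := by
  obtain ⟨_, _, halt⟩ := hgood
  have hk1 : k + 1 < l.length := by
    rcases hke with ⟨c, hc⟩; rcases hlev with ⟨d, hd⟩; omega
  refine ⟨hk1, ?_⟩
  exact (mp_eq hM (Subgraph.mem_edgeSet.mp
    ((halt k (l[k]'(by omega)) (l[k+1]'hk1) (List.getElem?_eq_getElem (by omega))
      (List.getElem?_eq_getElem hk1)).mpr hke))).symm

include hM in
lemma satlist_mp_odd {l : List V} (hgood : GoodL G M.edgeSet l) (hlev : Even l.length)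
    {k : ℕ} (hk : k < l.length) (hko : ¬ Even k) :
    ∃ hk1 : 1 ≤ k, mp hM (l[k]) = l[k-1]'(by omega) := by
  obtain ⟨_, _, halt⟩ := hgood
  have hk1 : 1 ≤ k := by
    rcases Nat.eq_zero_or_pos k with rfl | h
    · exact absurd Even.zero hko
    · exact h
  have hpar : Even (k - 1) := by
    rcases Nat.not_even_iff_odd.mp hko with ⟨c, hc⟩
    exact ⟨c, by omega⟩
  refine ⟨hk1, ?_⟩
  have := (halt (k-1) (l[k-1]'(by omega)) (l[k-1+1]'(by omega))
    (List.getElem?_eq_getElem (by omega)) (List.getElem?_eq_getElem (by omega))).mpr hpar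
  have heq := mp_eq hM (Subgraph.mem_edgeSet.mp this)
  have hidxeq : l[k-1+1]'(by omega) = l[k]'hk := by congr 1 <;> omega
  rw [hidxeq] at heq
  rw [heq, mp_invol hM]

include hM in
lemma satlist_mp_mem {l : List V} (hgood : GoodL G M.edgeSet l) (hlev : Even l.length)
    {k : ℕ} (hk : k < l.length) : mp hM (l[k]) ∈ l := by
  by_cases hke : Even k
  · obtain ⟨hk1, heq⟩ := satlist_mp_even hM hgood hlev hk hke
    rw [heq]; exact List.getElem_mem hk1
  · obtain ⟨hk1, heq⟩ := satlist_mp_odd hM hgood hlev hk hke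
    rw [heq]; exact List.getElem_mem (by omega)

include hM in
lemma splice_parity {l q : List V} (hl : GoodL G M.edgeSet l) (hlev : Even l.length)
    (hq : GoodL G M.edgeSet q) {k : ℕ} (hk : k < l.length) (hq1 : 1 ≤ q.length)
    (hlast : q[q.length - 1]? = some (l[k]))
    (hdisj : ∀ i a, i < q.length - 1 → q[i]? = some a → a ∉ l) :
    Even (q.length - 1) := by
  by_cases hq2 : q.length = 1
  · rw [hq2]; exact Even.zero
  by_contra hop
  -- the last edge of q would be an M-edge, forcing mp (l[k]) outside l
  have hq3 : 2 ≤ q.length := by omega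
  have hpar : Even (q.length - 2) := by
    rcases Nat.not_even_iff_odd.mp hop with ⟨c, hc⟩
    exact ⟨c, by omega⟩
  obtain ⟨_, _, halt⟩ := hq
  have hidxeq : q.length - 2 + 1 = q.length - 1 := by omega
  have hmm := (halt (q.length - 2) (q[q.length-2]'(by omega)) (l[k]'hk)
    (List.getElem?_eq_getElem (by omega)) (by rw [hidxeq]; exact hlast)).mpr hpar
  have heq := mp_eq hM (Subgraph.mem_edgeSet.mp hmm)
  have hmpin : mp hM (l[k]'hk) = q[q.length-2]'(by omega) := by
    rw [heq, mp_invol hM]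
  have hin := satlist_mp_mem hM hl hlev hk
  rw [hmpin] at hin
  exact hdisj (q.length - 2) _ (by omega) (List.getElem?_eq_getElem (by omega)) hin

include hM in
lemma splice_even_case {l q : List V} (hl : GoodL G M.edgeSet l) (hlev : Even l.length)
    (hq : GoodL G M.edgeSet q) {k : ℕ} (hk : k < l.length) (hq1 : 1 ≤ q.length)
    (hlast : q[q.length - 1]? = some (l[k]))
    (hdisj : ∀ i a, i < q.length - 1 → q[i]? = some a → a ∉ l)
    (hke : Even k) :
    GoodL G M.edgeSet (q ++ l.drop (k+1)) ∧
    (q ++ l.drop (k+1)).length = q.length + (l.length - (k+1)) ∧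
    (q ++ l.drop (k+1))[0]? = q[0]? ∧
    (q ++ l.drop (k+1))[(q ++ l.drop (k+1)).length - 1]? = some (l[l.length - 1]'(by omega)) := by
  have hqpar := splice_parity hM hl hlev hq hk hq1 hlast hdisj
  have hk1 : k + 1 < l.length := by
    rcases hke with ⟨c, hc⟩; rcases hlev with ⟨d, hd⟩; omega
  have hrlen : (l.drop (k+1)).length = l.length - (k+1) := List.length_drop
  have hr1 : 1 ≤ (l.drop (k+1)).length := by omega
  obtain ⟨hln, hlc, hla⟩ := hl
  have hglue : GoodL G M.edgeSet (q ++ l.drop (k+1)) := by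
    refine goodL_glue hq (hln.sublist (List.drop_sublist _ _)) ?_ ?_ hqpar hq1 hr1 ?_ ?_
    · rw [chain'_iff_get?] at hlc ⊢
      intro i a b ha hb
      rw [List.getElem?_drop] at ha hb
      exact hlc _ a b ha hb
    · intro i a b ha hb
      rw [List.getElem?_drop] at ha hb
      rw [hla (k+1+i) a b ha hb]
      rcases hke with ⟨c, hc⟩
      constructor
      · rintro ⟨d, hd⟩; exact ⟨d - c - 1, by omega⟩
      · rintro ⟨d, hd⟩; exact ⟨c + d + 1, by omega⟩
    · intro a b ha hb
      rw [hlast] at ha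
      obtain rfl := Option.some_injective _ ha.symm
      rw [List.getElem?_drop] at hb
      have hb2 : l[k+1]? = some b := by rw [← hb]
      constructor
      · exact chain'_iff_get?.mp hlc k _ _ (List.getElem?_eq_getElem (by omega)) hb2
      · exact (hla k _ _ (List.getElem?_eq_getElem (by omega)) hb2).mpr hke
    · intro a haq har
      obtain ⟨i, hi, rfl⟩ := List.mem_iff_getElem.mp haq
      by_cases hilt : i < q.length - 1
      · exact hdisj i _ hilt (List.getElem?_eq_getElem hi)
          (List.mem_of_mem_drop har)
      · have hieq : i = q.length - 1 := by omega
        have : q[i]? = some (l[k]'hk) := by rw [hieq]; exact hlast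
        rw [List.getElem?_eq_getElem hi] at this
        obtain heqa := Option.some_injective _ this
        rw [heqa] at har
        obtain ⟨j, hj, hjeq⟩ := List.mem_iff_getElem.mp har
        rw [List.getElem_drop] at hjeq
        have := (List.Nodup.getElem_inj_iff hln).mp hjeq
        omega
  refine ⟨hglue, by simp [hrlen], ?_, ?_⟩
  · rw [List.getElem?_append]
    rw [if_pos (by omega)]
  · have hlen2 : (q ++ l.drop (k+1)).length = q.length + (l.length - (k+1)) := by
      rw [List.length_append, hrlen]
    rw [hlen2]
    rw [List.getElem?_append_right (by omega)]
    rw [List.getElem?_drop]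
    have hidxe : k + 1 + (q.length + (l.length - (k+1)) - 1 - q.length) = l.length - 1 := by
      omega
    rw [hidxe]
    rw [List.getElem?_eq_getElem (by omega)]

include hM in
lemma splice_odd_case {l q : List V} (hl : GoodL G M.edgeSet l) (hlev : Even l.length)
    (hq : GoodL G M.edgeSet q) {k : ℕ} (hk : k < l.length) (hq1 : 1 ≤ q.length)
    (hlast : q[q.length - 1]? = some (l[k]))
    (hdisj : ∀ i a, i < q.length - 1 → q[i]? = some a → a ∉ l)
    (hko : ¬ Even k) :
    GoodL G M.edgeSet (q ++ (l.take k).reverse) ∧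
    (q ++ (l.take k).reverse).length = q.length + k ∧
    (q ++ (l.take k).reverse)[0]? = q[0]? ∧
    (q ++ (l.take k).reverse)[(q ++ (l.take k).reverse).length - 1]? = some (l[0]'(by omega)) := by
  have hqpar := splice_parity hM hl hlev hq hk hq1 hlast hdisj
  have hk1 : 1 ≤ k := by
    rcases Nat.eq_zero_or_pos k with rfl | h
    · exact absurd Even.zero hko
    · exact h
  have hrlen : ((l.take k).reverse).length = k := by
    rw [List.length_reverse, List.length_take]
    omega
  have hget : ∀ i, i < k → ((l.take k).reverse)[i]? = some (l[k-1-i]'(by omega)) := by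
    intro i hi
    rw [List.getElem?_reverse (by rw [List.length_take]; omega)]
    rw [List.length_take, min_eq_left (by omega)]
    rw [List.getElem?_take]
    rw [if_pos (by omega)]
    rw [List.getElem?_eq_getElem (by omega)]
  obtain ⟨hln, hlc, hla⟩ := hl
  have hglue : GoodL G M.edgeSet (q ++ (l.take k).reverse) := by
    refine goodL_glue hq (List.nodup_reverse.mpr (hln.sublist (List.take_sublist _ _))) ?_ ?_ hqpar hq1
      (by omega) ?_ ?_
    · rw [chain'_iff_get?]
      intro i a b ha hb
      have hib : i + 1 < k := by
        rcases List.getElem?_eq_some_iff.mp hb with ⟨hbb, _⟩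
        omega
      rw [hget i (by omega)] at ha
      rw [hget (i+1) (by omega)] at hb
      obtain rfl := Option.some_injective _ ha
      obtain rfl := Option.some_injective _ hb
      have hc := chain'_iff_get?.mp hlc (k-1-(i+1)) _ _
        (List.getElem?_eq_getElem (by omega)) (List.getElem?_eq_getElem (by omega))
      have hidxeq : l[k-1-(i+1)+1]'(by omega) = l[k-1-i]'(by omega) := by
        congr 1 <;> omega
      rw [hidxeq] at hc
      exact hc.symm
    · intro i a b ha hb
      have hib : i + 1 < k := by
        rcases List.getElem?_eq_some_iff.mp hb with ⟨hbb, _⟩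
        omega
      rw [hget i (by omega)] at ha
      rw [hget (i+1) (by omega)] at hb
      obtain rfl := Option.some_injective _ ha
      obtain rfl := Option.some_injective _ hb
      have hiff := hla (k-1-(i+1)) _ _
        (List.getElem?_eq_getElem (by omega)) (List.getElem?_eq_getElem (by omega))
      have hidxeq : l[k-1-(i+1)+1]'(by omega) = l[k-1-i]'(by omega) := by
        congr 1 <;> omega
      rw [hidxeq] at hiff
      rw [Sym2.eq_swap, hiff]
      rcases Nat.not_even_iff_odd.mp hko with ⟨c, hc⟩
      constructor
      · rintro ⟨d, hd⟩; exact ⟨c - d - 1, by omega⟩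
      · rintro ⟨d, hd⟩; exact ⟨c - d - 1, by omega⟩
    · intro a b ha hb
      rw [hlast] at ha
      obtain rfl := Option.some_injective _ ha.symm
      rw [hget 0 (by omega)] at hb
      obtain rfl := Option.some_injective _ hb
      have hpar : Even (k - 1) := by
        rcases Nat.not_even_iff_odd.mp hko with ⟨c, hc⟩
        exact ⟨c, by omega⟩
      have hidxeq : l[k-1+1]'(by omega) = l[k]'hk := by congr 1 <;> omega
      constructor
      · have hc := chain'_iff_get?.mp hlc (k-1) _ _
          (List.getElem?_eq_getElem (by omega)) (List.getElem?_eq_getElem (by omega))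
        rw [hidxeq] at hc
        exact hc.symm
      · have hiff := hla (k-1) _ _
          (List.getElem?_eq_getElem (by omega)) (List.getElem?_eq_getElem (by omega))
        rw [hidxeq] at hiff
        rw [Sym2.eq_swap]
        exact hiff.mpr hpar
    · intro a haq har
      obtain ⟨i, hi, rfl⟩ := List.mem_iff_getElem.mp haq
      have har' : q[i] ∈ l.take k := List.mem_reverse.mp har
      by_cases hilt : i < q.length - 1
      · exact hdisj i _ hilt (List.getElem?_eq_getElem hi)
          (List.mem_of_mem_take har')
      · have hieq : i = q.length - 1 := by omega
        have : q[i]? = some (l[k]'hk) := by rw [hieq]; exact hlast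
        rw [List.getElem?_eq_getElem hi] at this
        obtain heqa := Option.some_injective _ this
        rw [heqa] at har'
        obtain ⟨j, hj, hjeq⟩ := List.mem_iff_getElem.mp har'
        rw [List.length_take] at hj
        rw [List.getElem_take] at hjeq
        have := (List.Nodup.getElem_inj_iff hln).mp hjeq
        omega
  refine ⟨hglue, by simp [hrlen], ?_, ?_⟩
  · rw [List.getElem?_append]
    rw [if_pos (by omega)]
  · rw [List.getElem?_append_right (by rw [List.length_append, hrlen]; omega)]
    rw [List.length_append, hrlen]
    have : q.length + k - 1 - q.length = k - 1 := by omega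
    rw [this, hget (k-1) (by omega)]
    congr 2
    omega


include hM in
lemma split_at_mem {u w : V} {l : List V} (hgood : GoodL G M.edgeSet l)
    (hev : Even l.length) (hh : l[0]? = some u) (hlw : l[l.length - 1]? = some w)
    {k : ℕ} (hk : k < l.length) :
    (¬ Even k → SatL G M.edgeSet u (l[k])) ∧ (Even k → SatL G M.edgeSet (l[k]) w) := by
  constructor
  · intro hko
    refine ⟨l.take (k+1), hgood.take (k+1), ?_, ?_, ?_⟩
    · rw [List.length_take, min_eq_left (by omega)]
      rcases Nat.not_even_iff_odd.mp hko with ⟨c, hc⟩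
      exact ⟨c+1, by omega⟩
    · rw [List.getElem?_take, if_pos (by omega)]
      exact hh
    · rw [List.length_take, min_eq_left (by omega)]
      rw [List.getElem?_take, if_pos (by omega)]
      exact List.getElem?_eq_getElem hk
  · intro hke
    refine ⟨l.drop k, hgood.drop hke, ?_, ?_, ?_⟩
    · rw [List.length_drop]
      rcases hke with ⟨c, hc⟩; rcases hev with ⟨d, hd⟩
      exact ⟨d - c, by omega⟩
    · rw [List.getElem?_drop]
      exact List.getElem?_eq_getElem hk
    · rw [List.length_drop, List.getElem?_drop]
      have : k + (l.length - k - 1) = l.length - 1 := by omega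
      rw [this]
      exact hlw

lemma startL_of_satL {u v : V} (h : SatL G M.edgeSet u v) : StartL G M.edgeSet u v := by
  obtain ⟨l, hgood, hev, hh, hl⟩ := h
  refine ⟨l, hgood, ?_, hh, hl⟩
  rcases List.getElem?_eq_some_iff.mp hh with ⟨h0, _⟩
  rcases hev with ⟨c, hc⟩
  omega

lemma startL_prefix {v c : V} {q : List V} (hgood : GoodL G M.edgeSet q)
    (hq0 : q[0]? = some v) {t : ℕ} (ht : t < q.length) (ht1 : 1 ≤ t)
    (htc : q[t] = c) : StartL G M.edgeSet v c := by
  refine ⟨q.take (t+1), hgood.take (t+1), ?_, ?_, ?_⟩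
  · rw [List.length_take, min_eq_left (by omega)]
    omega
  · rw [List.getElem?_take, if_pos (by omega)]
    exact hq0
  · rw [List.length_take, min_eq_left (by omega)]
    simp only [Nat.add_sub_cancel]
    rw [List.getElem?_take, if_pos (by omega)]
    rw [List.getElem?_eq_getElem ht, htc]

include hM in
lemma rev_prefix {l : List V} (hl : GoodL G M.edgeSet l)
    {t : ℕ} (ht : t < l.length) (hto : ¬ Even t) :
    GoodL G M.edgeSet ((l.take (t+1)).reverse) ∧
    ((l.take (t+1)).reverse).length = t + 1 ∧
    ((l.take (t+1)).reverse)[0]? = some (l[t]) ∧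
    ((l.take (t+1)).reverse)[((l.take (t+1)).reverse).length - 1]? = some (l[0]'(by omega)) := by
  obtain ⟨hln, hlc, hla⟩ := hl
  have hrlen : ((l.take (t+1)).reverse).length = t + 1 := by
    rw [List.length_reverse, List.length_take]
    omega
  have hget : ∀ i, i ≤ t → ((l.take (t+1)).reverse)[i]? = some (l[t-i]'(by omega)) := by
    intro i hi
    rw [List.getElem?_reverse (by rw [List.length_take]; omega)]
    rw [List.length_take, min_eq_left (by omega)]
    rw [List.getElem?_take, if_pos (by omega)]
    rw [List.getElem?_eq_getElem (by omega)]
    congr 1 <;> omega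
  refine ⟨⟨List.nodup_reverse.mpr (hln.sublist (List.take_sublist _ _)), ?_, ?_⟩, hrlen, ?_, ?_⟩
  · rw [chain'_iff_get?]
    intro i a b ha hb
    have hib : i + 1 ≤ t := by
      rcases List.getElem?_eq_some_iff.mp hb with ⟨hbb, _⟩
      omega
    rw [hget i (by omega)] at ha
    rw [hget (i+1) hib] at hb
    obtain rfl := Option.some_injective _ ha
    obtain rfl := Option.some_injective _ hb
    have hc := chain'_iff_get?.mp hlc (t-(i+1)) _ _
      (List.getElem?_eq_getElem (by omega)) (List.getElem?_eq_getElem (by omega))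
    have hidxeq : l[t-(i+1)+1]'(by omega) = l[t-i]'(by omega) := by
      congr 1 <;> omega
    rw [hidxeq] at hc
    exact hc.symm
  · intro i a b ha hb
    have hib : i + 1 ≤ t := by
      rcases List.getElem?_eq_some_iff.mp hb with ⟨hbb, _⟩
      omega
    rw [hget i (by omega)] at ha
    rw [hget (i+1) hib] at hb
    obtain rfl := Option.some_injective _ ha
    obtain rfl := Option.some_injective _ hb
    have hiff := hla (t-(i+1)) _ _
      (List.getElem?_eq_getElem (by omega)) (List.getElem?_eq_getElem (by omega))
    have hidxeq : l[t-(i+1)+1]'(by omega) = l[t-i]'(by omega) := by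
      congr 1 <;> omega
    rw [hidxeq] at hiff
    rw [Sym2.eq_swap, hiff]
    rcases Nat.not_even_iff_odd.mp hto with ⟨c, hc⟩
    constructor
    · rintro ⟨d, hd⟩; exact ⟨c - d, by omega⟩
    · rintro ⟨d, hd⟩; exact ⟨c - d, by omega⟩
  · rw [hget 0 (by omega)]
    simp only [Nat.sub_zero]
  · rw [hrlen]
    simp only [Nat.add_sub_cancel]
    rw [hget t (by omega)]
    congr 2
    omega

/-- `ρ v x`: an alternating M-first path from `v` to `x` (or `x = v`). -/
def Rho (G : SimpleGraph V) (F : Set (Sym2 V)) (v x : V) : Prop :=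
  x = v ∨ StartL G F v x

include hM in
lemma rho_mp {v x : V} (hρ : Rho G M.edgeSet v x) : Rho G M.edgeSet v (mp hM x) := by
  classical
  rcases hρ with rfl | ⟨q, hgood, hq2, hq0, hqlast⟩
  · exact Or.inr (startL_of_satL (satL_two (mp_gadj hM x) (mp_mem_edge hM x)))
  by_cases hve : mp hM x = v
  · exact Or.inl hve
  right
  obtain ⟨hqlt, hqv⟩ := List.getElem?_eq_some_iff.mp hq0
  obtain ⟨hqlt2, hqx⟩ := List.getElem?_eq_some_iff.mp hqlast
  by_cases hmem : mp hM x ∈ q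
  · obtain ⟨t, ht, htc⟩ := List.mem_iff_getElem.mp hmem
    have ht1 : 1 ≤ t := by
      rcases Nat.eq_zero_or_pos t with rfl | h
      · rw [hqv] at htc; exact absurd htc.symm hve
      · exact h
    exact startL_prefix hgood hq0 ht ht1 htc
  · -- extend q by the matching edge
    obtain ⟨hqn, hqc, hqa⟩ := hgood
    have hpar : Even (q.length - 1) := by
      by_contra hop
      have hpar2 : Even (q.length - 2) := by
        rcases Nat.not_even_iff_odd.mp hop with ⟨c, hc⟩
        exact ⟨c, by omega⟩
      have hidxeq : q.length - 2 + 1 = q.length - 1 := by omega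
      have hmm := (hqa (q.length - 2) (q[q.length-2]'(by omega)) x
        (List.getElem?_eq_getElem (by omega)) (by rw [hidxeq, hqlast])).mpr hpar2
      have heq := mp_eq hM (Subgraph.mem_edgeSet.mp hmm)
      apply hmem
      have : mp hM x = q[q.length-2]'(by omega) := by rw [heq, mp_invol hM]
      rw [this]
      exact List.getElem_mem _
    have hsnoc := GoodL.snoc (G := G) (F := M.edgeSet) ⟨hqn, hqc, hqa⟩ (by omega)
      (fun a ha => by
        rw [hqlast] at ha
        have haeq : a = x := Option.some_injective _ ha.symm
        rw [haeq]
        exact mp_gadj hM x)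
      hmem
      (fun a ha => by
        rw [hqlast] at ha
        have haeq : a = x := Option.some_injective _ ha.symm
        rw [haeq]
        exact iff_of_true (mp_mem_edge hM x) hpar)
    refine ⟨q ++ [mp hM x], hsnoc, ?_, ?_, ?_⟩
    · rw [List.length_append]
      simp
      omega
    · rw [List.getElem?_append, if_pos (by omega)]
      exact hq0
    · rw [List.length_append]
      simp only [List.length_cons, List.length_nil]
      have : q.length + 1 - 1 = q.length := by omega
      rw [this]
      exact List.getElem?_concat_length


include hM in
lemma rho_step [Fintype V] {v x y : V} (hρ : Rho G M.edgeSet v x)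
    (hadj : (allowedSubgraph G).Adj x y) : Rho G M.edgeSet v y := by
  classical
  by_cases hyv : y = v
  · exact Or.inl hyv
  rw [allowedSubgraph, SimpleGraph.fromEdgeSet_adj] at hadj
  obtain ⟨⟨hGe, hall⟩, hne⟩ := hadj
  have hGxy : G.Adj x y := hGe
  by_cases hm : s(x, y) ∈ M.edgeSet
  · have hy : y = mp hM x := mp_eq hM (Subgraph.mem_edgeSet.mp hm)
    rw [hy]
    exact rho_mp hM hρ
  obtain ⟨l, hlg, hlev, hlx, hly⟩ := satL_of_allowed hM hall hGxy
  obtain ⟨hl0, hlxv⟩ := List.getElem?_eq_some_iff.mp hlx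
  obtain ⟨hln1, hlyv⟩ := List.getElem?_eq_some_iff.mp hly
  have hlen2 : 2 ≤ l.length := by rcases hlev with ⟨c, hc⟩; omega
  rcases hρ with rfl | ⟨q0, hq0g, hq02, hq0v, hq0x⟩
  · exact Or.inr (startL_of_satL ⟨l, hlg, hlev, hlx, hly⟩)
  by_cases hvl : v ∈ l
  · obtain ⟨t, ht, htv⟩ := List.mem_iff_getElem.mp hvl
    have htn : t ≠ l.length - 1 := by
      intro heq
      apply hyv
      rw [← hlyv, ← htv]
      congr 1 <;> omega
    by_cases hte : Even t
    · right
      have hsp := (split_at_mem hM hlg hlev hlx hly ht).2 hte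
      rw [htv] at hsp
      exact startL_of_satL hsp
    · right
      obtain ⟨hrg, hrlen, hr0, hrlast⟩ := rev_prefix hM hlg ht hte
      have hy_nin : y ∉ (l.take (t+1)).reverse := by
        intro hmem
        have hmem2 : y ∈ l.take (t+1) := List.mem_reverse.mp hmem
        obtain ⟨i, hi, hieq⟩ := List.mem_iff_getElem.mp hmem2
        rw [List.length_take] at hi
        rw [List.getElem_take] at hieq
        rw [← hlyv] at hieq
        have := (List.Nodup.getElem_inj_iff hlg.1).mp hieq
        omega
      have hsnoc := GoodL.snoc hrg (by omega)
        (fun a ha => by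
          rw [hrlast] at ha
          have haeq : a = l[0]'(by omega) := Option.some_injective _ ha.symm
          rw [haeq, hlxv]
          exact hGxy)
        hy_nin
        (fun a ha => by
          rw [hrlast] at ha
          have haeq : a = l[0]'(by omega) := Option.some_injective _ ha.symm
          rw [haeq, hlxv, hrlen]
          simp only [Nat.add_sub_cancel]
          exact iff_of_false hm hte)
      refine ⟨(l.take (t+1)).reverse ++ [y], hsnoc, ?_, ?_, ?_⟩
      · rw [List.length_append, hrlen]
        simp only [List.length_cons, List.length_nil]
        omega
      · rw [List.getElem?_append, if_pos (by omega)]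
        rw [hr0, htv]
      · rw [List.length_append, hrlen]
        simp only [List.length_cons, List.length_nil]
        have h1 : t + 1 + 1 - 1 = ((l.take (t+1)).reverse).length := by rw [hrlen]; omega
        rw [h1]
        exact List.getElem?_concat_length
  obtain ⟨hq0lt, hq0vv⟩ := List.getElem?_eq_some_iff.mp hq0v
  obtain ⟨hq0lt2, hq0xx⟩ := List.getElem?_eq_some_iff.mp hq0x
  have hex : ∃ j, ∃ (hj : j < q0.length), q0[j] ∈ l := by
    refine ⟨q0.length - 1, by omega, ?_⟩
    rw [hq0xx, ← hlxv]
    exact List.getElem_mem hl0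
  obtain ⟨hjlt, hjmem⟩ := Nat.find_spec hex
  set j := Nat.find hex with hjd
  have hjmin : ∀ i, i < j → ∀ (hiq : i < q0.length), q0[i] ∉ l := by
    intro i hij hiq hmm
    exact Nat.find_min hex hij ⟨hiq, hmm⟩
  have hj1 : 1 ≤ j := by
    rcases Nat.eq_zero_or_pos j with hj0 | h
    · exfalso
      apply hvl
      rw [← hq0vv]
      have : q0[0] = q0[j]'hjlt := by congr 1 <;> omega
      rw [this]
      exact hjmem
    · exact h
  obtain ⟨k, hk, hkeq⟩ := List.mem_iff_getElem.mp hjmem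
  have hqg : GoodL G M.edgeSet (q0.take (j+1)) := hq0g.take _
  have hqlen : (q0.take (j+1)).length = j + 1 := by
    rw [List.length_take]; omega
  have hqlast : (q0.take (j+1))[(q0.take (j+1)).length - 1]? = some (l[k]) := by
    rw [hqlen]
    simp only [Nat.add_sub_cancel]
    rw [List.getElem?_take, if_pos (by omega), List.getElem?_eq_getElem hjlt]
    rw [hkeq]
  have hq0q : (q0.take (j+1))[0]? = some v := by
    rw [List.getElem?_take, if_pos (by omega)]
    exact hq0v
  have hdisj : ∀ i a, i < (q0.take (j+1)).length - 1 → (q0.take (j+1))[i]? = some a →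
      a ∉ l := by
    intro i a hi ha
    rw [hqlen] at hi
    rw [List.getElem?_take, if_pos (by omega)] at ha
    obtain ⟨hia, rfl⟩ := List.getElem?_eq_some_iff.mp ha
    exact hjmin i (by omega) hia
  by_cases hkl : k = l.length - 1
  · right
    refine ⟨q0.take (j+1), hqg, by rw [hqlen]; omega, hq0q, ?_⟩
    rw [hqlast]
    have hix : l[k]'hk = l[l.length - 1]'hln1 := by congr 1 <;> omega
    rw [hix, hlyv]
  · by_cases hke : Even k
    · right
      obtain ⟨hgl, hglen, hg0, hglast⟩ :=
        splice_even_case hM hlg hlev hqg hk (by omega) hqlast hdisj hke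
      refine ⟨_, hgl, ?_, ?_, ?_⟩
      · rw [hglen, hqlen]; omega
      · rw [hg0]; exact hq0q
      · rw [hglast, hlyv]
    · right
      obtain ⟨hgl, hglen, hg0, hglast⟩ :=
        splice_odd_case hM hlg hlev hqg hk (by omega) hqlast hdisj hke
      have hjpar : Even ((q0.take (j+1)).length - 1) :=
        splice_parity hM hlg hlev hqg hk (by omega) hqlast hdisj
      have hk1 : 1 ≤ k := by
        rcases Nat.eq_zero_or_pos k with rfl | h
        · exact absurd Even.zero hke
        · exact h
      set r := q0.take (j+1) ++ (l.take k).reverse with hrd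
      have hy_nin : y ∉ r := by
        intro hmem
        rcases List.mem_append.mp hmem with hmq | hmr
        · obtain ⟨i, hi, hieq⟩ := List.mem_iff_getElem.mp hmq
          by_cases hi2 : i < (q0.take (j+1)).length - 1
          · apply hdisj i _ hi2 (by rw [List.getElem?_eq_getElem hi, hieq])
            rw [← hlyv]
            exact List.getElem_mem hln1
          · have hieq2 : (q0.take (j+1))[i]? = some (l[k]) := by
              rw [show i = (q0.take (j+1)).length - 1 by omega]
              exact hqlast
            rw [List.getElem?_eq_getElem hi, hieq] at hieq2
            have hyl : y = l[k]'hk := Option.some_injective _ hieq2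
            rw [← hlyv] at hyl
            have := (List.Nodup.getElem_inj_iff hlg.1).mp hyl
            omega
        · have hmem2 : y ∈ l.take k := List.mem_reverse.mp hmr
          obtain ⟨i, hi, hieq⟩ := List.mem_iff_getElem.mp hmem2
          rw [List.length_take] at hi
          rw [List.getElem_take] at hieq
          rw [← hlyv] at hieq
          have := (List.Nodup.getElem_inj_iff hlg.1).mp hieq
          omega
      have hsnoc := GoodL.snoc hgl (by rw [hglen]; omega)
        (fun a ha => by
          rw [hglast] at ha
          have haeq : a = l[0]'(by omega) := Option.some_injective _ ha.symm
          rw [haeq, hlxv]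
          exact hGxy)
        hy_nin
        (fun a ha => by
          rw [hglast] at ha
          have haeq : a = l[0]'(by omega) := Option.some_injective _ ha.symm
          rw [haeq, hlxv, hglen]
          refine iff_of_false hm ?_
          rw [hqlen] at hjpar ⊢
          simp only [Nat.add_sub_cancel] at hjpar
          rcases hjpar with ⟨c, hc⟩
          rcases Nat.not_even_iff_odd.mp hke with ⟨d, hd⟩
          rw [Nat.not_even_iff_odd]
          exact ⟨c + d, by omega⟩)
      refine ⟨r ++ [y], hsnoc, ?_, ?_, ?_⟩
      · rw [List.length_append, hglen]
        simp only [List.length_cons, List.length_nil]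
        omega
      · rw [List.getElem?_append, if_pos (by rw [hglen, hqlen]; omega)]
        rw [hg0]
        exact hq0q
      · rw [List.length_append]
        simp only [List.length_cons, List.length_nil]
        have h1 : r.length + 1 - 1 = r.length := by omega
        rw [h1]
        exact List.getElem?_concat_length

include hM in
lemma rho_walk [Fintype V] {v : V} {x u : V} (p : (allowedSubgraph G).Walk x u)
    (hρ : Rho G M.edgeSet v x) : Rho G M.edgeSet v u := by
  induction p with
  | nil => exact hρ
  | cons h q ih => exact ih (rho_step hM hρ h)

include hM in
lemma rho_of_sameFC [Fintype V] {v u : V} (h : SameFC G v u) :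
    Rho G M.edgeSet v u := by
  obtain ⟨p⟩ := h
  exact rho_walk hM p (Or.inl rfl)

include hM in
lemma splice_from_start [Fintype V] {u w v : V}
    {l : List V} (hl : GoodL G M.edgeSet l) (hlev : Even l.length)
    (hh : l[0]? = some u) (hlw : l[l.length - 1]? = some w)
    {q0 : List V} (hq0 : GoodL G M.edgeSet q0) (hq02 : 2 ≤ q0.length)
    (hq0v : q0[0]? = some v) (hq0u : q0[q0.length - 1]? = some u)
    (hvnotin : v ∉ l) :
    SatL G M.edgeSet u v ∨ SatL G M.edgeSet v w := by
  classical
  obtain ⟨hl0, hlxv⟩ := List.getElem?_eq_some_iff.mp hh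
  obtain ⟨hln1, hlyv⟩ := List.getElem?_eq_some_iff.mp hlw
  obtain ⟨hq0lt, hq0vv⟩ := List.getElem?_eq_some_iff.mp hq0v
  obtain ⟨hq0lt2, hq0xx⟩ := List.getElem?_eq_some_iff.mp hq0u
  have hex : ∃ j, ∃ (hj : j < q0.length), q0[j] ∈ l := by
    refine ⟨q0.length - 1, by omega, ?_⟩
    rw [hq0xx, ← hlxv]
    exact List.getElem_mem hl0
  obtain ⟨hjlt, hjmem⟩ := Nat.find_spec hex
  set j := Nat.find hex with hjd
  have hjmin : ∀ i, i < j → ∀ (hiq : i < q0.length), q0[i] ∉ l := by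
    intro i hij hiq hmm
    exact Nat.find_min hex hij ⟨hiq, hmm⟩
  have hj1 : 1 ≤ j := by
    rcases Nat.eq_zero_or_pos j with hj0 | h
    · exfalso
      apply hvnotin
      rw [← hq0vv]
      have : q0[0] = q0[j]'hjlt := by congr 1 <;> omega
      rw [this]
      exact hjmem
    · exact h
  obtain ⟨k, hk, hkeq⟩ := List.mem_iff_getElem.mp hjmem
  have hqg : GoodL G M.edgeSet (q0.take (j+1)) := hq0.take _
  have hqlen : (q0.take (j+1)).length = j + 1 := by
    rw [List.length_take]; omega
  have hqlast : (q0.take (j+1))[(q0.take (j+1)).length - 1]? = some (l[k]) := by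
    rw [hqlen]
    simp only [Nat.add_sub_cancel]
    rw [List.getElem?_take, if_pos (by omega), List.getElem?_eq_getElem hjlt]
    rw [hkeq]
  have hq0q : (q0.take (j+1))[0]? = some v := by
    rw [List.getElem?_take, if_pos (by omega)]
    exact hq0v
  have hdisj : ∀ i a, i < (q0.take (j+1)).length - 1 → (q0.take (j+1))[i]? = some a →
      a ∉ l := by
    intro i a hi ha
    rw [hqlen] at hi
    rw [List.getElem?_take, if_pos (by omega)] at ha
    obtain ⟨hia, rfl⟩ := List.getElem?_eq_some_iff.mp ha
    exact hjmin i (by omega) hia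
  have hjpar : Even ((q0.take (j+1)).length - 1) :=
    splice_parity hM hl hlev hqg hk (by omega) hqlast hdisj
  rw [hqlen] at hjpar
  simp only [Nat.add_sub_cancel] at hjpar
  by_cases hke : Even k
  · right
    obtain ⟨hgl, hglen, hg0, hglast⟩ :=
      splice_even_case hM hl hlev hqg hk (by omega) hqlast hdisj hke
    refine ⟨_, hgl, ?_, ?_, ?_⟩
    · rw [hglen, hqlen]
      rcases hjpar with ⟨c, hc⟩
      rcases hke with ⟨d, hd⟩
      rcases hlev with ⟨e, he⟩
      exact ⟨c + 1 + (e - d - 1), by omega⟩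
    · rw [hg0]; exact hq0q
    · rw [hglast, hlyv]
  · left
    apply satL_symm
    obtain ⟨hgl, hglen, hg0, hglast⟩ :=
      splice_odd_case hM hl hlev hqg hk (by omega) hqlast hdisj hke
    refine ⟨_, hgl, ?_, ?_, ?_⟩
    · rw [hglen, hqlen]
      rcases hjpar with ⟨c, hc⟩
      rcases Nat.not_even_iff_odd.mp hke with ⟨d, hd⟩
      exact ⟨c + 1 + d, by omega⟩
    · rw [hg0]; exact hq0q
    · rw [hglast, hlxv]

include hM in
theorem nsp_trans [Fintype V] {u w v : V} (hsat : SatL G M.edgeSet u w)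
    (hreach : SameFC G v u) :
    v = u ∨ v = w ∨ SatL G M.edgeSet u v ∨ SatL G M.edgeSet v w := by
  classical
  obtain ⟨l, hgood, hev, hh, hlw⟩ := hsat
  obtain ⟨hl0, hlxv⟩ := List.getElem?_eq_some_iff.mp hh
  obtain ⟨hln1, hlyv⟩ := List.getElem?_eq_some_iff.mp hlw
  by_cases hvl : v ∈ l
  · obtain ⟨k, hk, hkeq⟩ := List.mem_iff_getElem.mp hvl
    by_cases hke : Even k
    · by_cases hk0 : k = 0
      · left
        rw [← hlxv, ← hkeq]
        congr 1 <;> omega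
      · right; right; right
        have hsp := (split_at_mem hM hgood hev hh hlw hk).2 hke
        rw [hkeq] at hsp
        exact hsp
    · right; right; left
      have hsp := (split_at_mem hM hgood hev hh hlw hk).1 hke
      rw [hkeq] at hsp
      exact hsp
  · have hvu : v ≠ u := by
      intro heq
      apply hvl
      rw [heq, ← hlxv]
      exact List.getElem_mem hl0
    rcases rho_of_sameFC hM hreach with heq | ⟨q0, hq0g, hq02, hq0v, hq0u⟩
    · exact Or.inl heq.symm
    · right; right
      exact splice_from_start hM hgood hev hh hlw hq0g hq02 hq0v hq0u hvl

end Apps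
end K18


open K18 in
theorem stmt18 {V : Type*} [Fintype V] (G : SimpleGraph V)
    (M : SimpleGraph.Subgraph G) (hM : M.IsPerfectMatching)
    (C : Set V) (hC : IsFactorComponent G C)
    (S : Set V) (hSC : S ⊆ C) :
    IsClassOf G C S ↔
      ((∀ a ∈ S, ∀ b ∈ S, ∀ p : G.Walk a b, ¬ IsSaturatedPath M.edgeSet p) ∧
        ∀ S' : Set V, S ⊆ S' → S' ⊆ C →
          (∀ a ∈ S', ∀ b ∈ S', ∀ p : G.Walk a b, ¬ IsSaturatedPath M.edgeSet p) →
          S' = S) := by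
  classical
  obtain ⟨v1, hc1⟩ := hC
  have hmemC : ∀ x, x ∈ C ↔ SameFC G v1 x := by
    intro x
    rw [hc1]
    exact Iff.rfl
  have hCC : ∀ a ∈ C, ∀ b ∈ C, SameFC G a b := by
    intro a ha b hb
    exact ((hmemC a).mp ha).symm.trans ((hmemC b).mp hb)
  have hv1C : v1 ∈ C := (hmemC v1).mpr (Reachable.refl v1)
  constructor
  · rintro ⟨⟨v0, hS⟩, hSC'⟩
    have hmemS : ∀ x, x ∈ S ↔ simG G x v0 := by
      intro x
      rw [hS]
      exact Iff.rfl
    have hv0S : v0 ∈ S := (hmemS v0).mpr ⟨Reachable.refl v0, Or.inl rfl⟩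
    have hv0C : v0 ∈ C := hSC hv0S
    have hnsatS : ∀ x, x ∈ S → SatL G M.edgeSet x v0 → False := by
      intro x hxS hsx
      obtain ⟨_, hcx⟩ := (hmemS x).mp hxS
      rcases hcx with rfl | hnf
      · exact satL_ne hsx rfl
      · exact hnf (factorizable_of_satL hM hsx)
    constructor
    · intro a haS b hbS p hp
      have hsat : SatL G M.edgeSet a b := satL_of_walk p hp
      have haC := hSC haS
      have hbC := hSC hbS
      rcases nsp_trans hM hsat (hCC v0 hv0C a haC) with h | h | h | h
      · rw [← h] at hsat
        exact hnsatS b hbS (satL_symm hsat)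
      · rw [← h] at hsat
        exact hnsatS a haS hsat
      · exact hnsatS a haS h
      · exact hnsatS b hbS (satL_symm h)
    · intro S' hSS' hS'C hS'nsp
      apply Set.Subset.antisymm ?_ hSS'
      intro x hxS'
      rw [hmemS x]
      refine ⟨hCC x (hS'C hxS') v0 hv0C, ?_⟩
      by_cases hxv : x = v0
      · exact Or.inl hxv
      · right
        intro hf
        obtain ⟨p, hp⟩ := walk_of_satL (satL_of_factorizable hM hxv hf)
        exact hS'nsp x hxS' v0 (hSS' hv0S) p hp
  · rintro ⟨hpair, hmax⟩
    have hSne : S.Nonempty := by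
      by_contra hne
      rw [Set.not_nonempty_iff_eq_empty] at hne
      have h1 := hmax {v1} (by rw [hne]; exact Set.empty_subset _)
        (by
          intro z hz
          rw [Set.mem_singleton_iff] at hz
          rw [hz]
          exact hv1C)
        (by
          intro a ha b hb p hp
          rw [Set.mem_singleton_iff] at ha hb
          subst ha
          subst hb
          exact satL_ne (satL_of_walk p hp) rfl)
      rw [hne] at h1
      exact Set.singleton_ne_empty v1 h1
    obtain ⟨v0, hv0S⟩ := hSne
    have hv0C := hSC hv0S
    refine ⟨⟨v0, ?_⟩, hSC⟩
    ext x
    simp only [Set.mem_setOf_eq]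
    constructor
    · intro hxS
      refine ⟨hCC x (hSC hxS) v0 hv0C, ?_⟩
      by_cases hxv : x = v0
      · exact Or.inl hxv
      · right
        intro hf
        obtain ⟨p, hp⟩ := walk_of_satL (satL_of_factorizable hM hxv hf)
        exact hpair x hxS v0 hv0S p hp
    · rintro ⟨hsfc, hcase⟩
      by_cases hxv0 : x = v0
      · rw [hxv0]
        exact hv0S
      have hnf : ¬ Factorizable (G.induce {w : V | w ≠ x ∧ w ≠ v0}) := by
        rcases hcase with h | h
        · exact absurd h hxv0
        · exact h
      have hxC : x ∈ C := by
        rw [hmemC]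
        exact ((hmemC v0).mp hv0C).trans hsfc.symm
      have hnsatxv0 : ¬ SatL G M.edgeSet x v0 := fun hs =>
        hnf (factorizable_of_satL hM hs)
      have hkey : ∀ a, a ∈ S → SatL G M.edgeSet a x → False := by
        intro a haS hsat
        rcases nsp_trans hM hsat (hCC v0 hv0C a (hSC haS)) with h | h | h | h
        · rw [← h] at hsat
          exact hnsatxv0 (satL_symm hsat)
        · exact hxv0 h.symm
        · obtain ⟨p', hp'⟩ := walk_of_satL h
          exact hpair a haS v0 hv0S p' hp'
        · exact hnsatxv0 (satL_symm h)
      have hS'sub : S ∪ {x} ⊆ C := by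
        intro z hz
        rcases hz with hzS | hzx
        · exact hSC hzS
        · rw [Set.mem_singleton_iff] at hzx
          rw [hzx]
          exact hxC
      have hS'pair : ∀ a ∈ S ∪ {x}, ∀ b ∈ S ∪ {x}, ∀ p : G.Walk a b,
          ¬ IsSaturatedPath M.edgeSet p := by
        intro a ha b hb p hp
        have hsat := satL_of_walk p hp
        rcases ha with haS | hax <;> rcases hb with hbS | hbx
        · exact hpair a haS b hbS p hp
        · rw [Set.mem_singleton_iff] at hbx
          subst hbx
          exact hkey a haS hsat
        · rw [Set.mem_singleton_iff] at hax
          subst hax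
          exact hkey b hbS (satL_symm hsat)
        · rw [Set.mem_singleton_iff] at hax hbx
          subst hax
          subst hbx
          exact satL_ne hsat rfl
      have h1 := hmax (S ∪ {x}) Set.subset_union_left hS'sub hS'pair
      rw [← h1]
      exact Set.mem_union_right _ rfl
end

section
/- Let G be a graph and X ⊆ V(G) an odd-maximal barrier of G. Then X is a maximal barrier of G (i.e., no proper superset of X is a barrier) if and only if C_X = ∅. -/
open SimpleGraph

section AuxProof

open SimpleGraph

variable {V : Type*}

private lemma reach_down (G : SimpleGraph V) {S T : Set V} :
    ∀ {a b : ↥T} (p : (G.induce T).Walk a b),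
      (∀ x ∈ p.support, (x : V) ∈ S) →
      ∀ (ha : (a : V) ∈ S) (hb : (b : V) ∈ S),
        (G.induce S).Reachable ⟨a, ha⟩ ⟨b, hb⟩ := by
  intro a b p
  induction p with
  | nil => intro _ ha hb; rfl
  | @cons a c b h q ih =>
    intro hsup ha hb
    have hc : (c : V) ∈ S := hsup c (by simp)
    have hadj : (G.induce S).Adj ⟨(a : V), ha⟩ ⟨(c : V), hc⟩ := by
      simpa using h
    exact hadj.reachable.trans (ih (fun x hx => hsup x (by simp [hx])) hc hb)

private lemma exists_noncut {W : Type*} [Fintype W] (H : SimpleGraph W)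
    (K : H.ConnectedComponent) (hK : 1 < K.supp.ncard) :
    ∃ u ∈ K.supp, ∀ w z, w ∈ K.supp → z ∈ K.supp → w ≠ u → z ≠ u →
      ∃ p : H.Walk w z, u ∉ p.support := by
  classical
  obtain ⟨r, hr⟩ := K.exists_rep
  have hrK : r ∈ K.supp := by
    rw [SimpleGraph.ConnectedComponent.mem_supp_iff]; exact hr
  obtain ⟨u, huK, hmax⟩ := Set.exists_max_image K.supp (H.dist r) K.supp.toFinite ⟨r, hrK⟩
  have hreach : ∀ w ∈ K.supp, H.Reachable r w := by
    intro w hw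
    rw [SimpleGraph.ConnectedComponent.mem_supp_iff] at hw
    exact SimpleGraph.ConnectedComponent.eq.mp (hr.trans hw.symm)
  have key : ∀ w ∈ K.supp, w ≠ u → ∃ p : H.Walk r w, u ∉ p.support := by
    intro w hw hwu
    obtain ⟨p, hp⟩ := (hreach w hw).exists_walk_length_eq_dist
    refine ⟨p, fun hu => ?_⟩
    have h1 : H.dist r u ≤ (p.takeUntil u hu).length := SimpleGraph.dist_le _
    have h2 : (p.dropUntil u hu).length ≠ 0 := fun h0 =>
      hwu (SimpleGraph.Walk.eq_of_length_eq_zero h0).symm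
    have h3 : (p.takeUntil u hu).length + (p.dropUntil u hu).length = p.length := by
      rw [← SimpleGraph.Walk.length_append, p.take_spec hu]
    have h4 := hmax w hw
    omega
  refine ⟨u, huK, fun w z hw hz hwu hzu => ?_⟩
  obtain ⟨p1, hp1⟩ := key w hw hwu
  obtain ⟨p2, hp2⟩ := key z hz hzu
  refine ⟨p1.reverse.append p2, fun hu => ?_⟩
  rw [SimpleGraph.Walk.mem_support_append_iff] at hu
  rcases hu with hu | hu
  · rw [SimpleGraph.Walk.support_reverse, List.mem_reverse] at hu
    exact hp1 hu
  · exact hp2 hu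

private lemma qG_insert [Fintype V] (G : SimpleGraph V) (X : Set V) (u : V)
    (hu : u ∈ Xᶜ)
    (hev : ¬ Odd ((G.induce Xᶜ).connectedComponentMk ⟨u, hu⟩).supp.ncard)
    (hcut : ∀ w z, w ∈ ((G.induce Xᶜ).connectedComponentMk ⟨u, hu⟩).supp →
        z ∈ ((G.induce Xᶜ).connectedComponentMk ⟨u, hu⟩).supp →
        w ≠ ⟨u, hu⟩ → z ≠ ⟨u, hu⟩ →
        ∃ p : (G.induce Xᶜ).Walk w z, (⟨u, hu⟩ : ↥Xᶜ) ∉ p.support) :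
    qG G (X ∪ {u}) = qG G X + 1 := by
  classical
  set A : Set V := Xᶜ with hA
  set B : Set V := (X ∪ {u})ᶜ with hB
  have hBA : B ⊆ A := by
    intro x hx
    simp only [hB, Set.mem_compl_iff, Set.mem_union] at hx
    exact fun h => hx (Or.inl h)
  have hmemB : ∀ x : V, x ∈ B ↔ x ∈ A ∧ x ≠ u := by
    intro x
    simp only [hB, hA, Set.mem_compl_iff, Set.mem_union, Set.mem_singleton_iff]
    tauto
  set f : G.induce B ↪g G.induce A := G.induceHomOfLE hBA with hf
  have hfval : ∀ x : ↥B, ((f x : ↥A) : V) = (x : V) := fun x => rfl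
  set φ : (G.induce B).ConnectedComponent → (G.induce A).ConnectedComponent :=
    SimpleGraph.ConnectedComponent.map f.toHom with hφ
  have hφmk : ∀ x : ↥B, φ ((G.induce B).connectedComponentMk x) =
      (G.induce A).connectedComponentMk (f x) := fun x => rfl
  set uA : ↥A := ⟨u, hu⟩ with huA
  set K : (G.induce A).ConnectedComponent := (G.induce A).connectedComponentMk uA with hK
  have hKev : ¬ Odd K.supp.ncard := hev
  -- a vertex of K other than u
  have hKpos : 0 < K.supp.ncard := by
    rw [Set.ncard_pos K.supp.toFinite]
    exact ⟨uA, by rw [SimpleGraph.ConnectedComponent.mem_supp_iff]⟩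
  have hK2 : 1 < K.supp.ncard := by
    rw [Nat.not_odd_iff_even] at hKev
    obtain ⟨k, hk⟩ := hKev
    omega
  obtain ⟨z0, hz0K, hz0u⟩ := Set.exists_ne_of_one_lt_ncard hK2 uA
  have hz0B : (z0 : V) ∈ B := by
    rw [hmemB]
    exact ⟨z0.2, fun h => hz0u (Subtype.ext h)⟩
  set w0 : ↥B := ⟨(z0 : V), hz0B⟩ with hw0
  set c0 : (G.induce B).ConnectedComponent := (G.induce B).connectedComponentMk w0 with hc0
  have hfw0 : f w0 = z0 := Subtype.ext rfl
  have hφc0 : φ c0 = K := by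
    rw [hc0, hφmk, hfw0]
    exact hz0K
  -- vertices of B-components avoid u
  have hneu : ∀ x : ↥B, f x ≠ uA := by
    intro x hx
    have := congrArg (Subtype.val) hx
    rw [hfval] at this
    exact ((hmemB x).mp x.2).2 this
  -- members of components not equal to K come back down
  have cl_back : ∀ (c : (G.induce B).ConnectedComponent) (y : ↥A),
      y ∈ (φ c).supp → φ c ≠ K →
      ∃ hyB : (y : V) ∈ B, (⟨(y : V), hyB⟩ : ↥B) ∈ c.supp := by
    intro c y hy hcK
    obtain ⟨x0, hx0⟩ := c.exists_rep
    replace hx0 : (G.induce B).connectedComponentMk x0 = c := hx0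
    have hfx0 : f x0 ∈ (φ c).supp := by
      rw [SimpleGraph.ConnectedComponent.mem_supp_iff, ← hx0, hφmk]
    rw [SimpleGraph.ConnectedComponent.mem_supp_iff] at hy hfx0
    obtain ⟨p⟩ := SimpleGraph.ConnectedComponent.eq.mp (hy.trans hfx0.symm)
    have hsup : ∀ s ∈ p.support, (s : V) ∈ B := by
      intro s hs
      have hsc : (G.induce A).connectedComponentMk s = φ c :=
        ((φ c).mem_supp_iff s).mp (by
          rw [SimpleGraph.ConnectedComponent.mem_supp_iff]
          exact (SimpleGraph.ConnectedComponent.eq.mpr ⟨p.takeUntil s hs⟩).symm.trans hy)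
      rw [hmemB]
      refine ⟨s.2, fun hsu => hcK ?_⟩
      rw [← hsc, hK]
      congr 1
      exact Subtype.ext hsu
    have hyB : (y : V) ∈ B := hsup y p.start_mem_support
    have hx0B : ((f x0 : ↥A) : V) ∈ B := hsup (f x0) p.end_mem_support
    have hre := reach_down G p hsup hyB hx0B
    refine ⟨hyB, ?_⟩
    rw [SimpleGraph.ConnectedComponent.mem_supp_iff, ← hx0]
    rw [SimpleGraph.ConnectedComponent.eq]
    have : (⟨((f x0 : ↥A) : V), hx0B⟩ : ↥B) = x0 := Subtype.ext (hfval x0)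
    rwa [this] at hre
  -- components mapping to K equal c0
  have cl_K : ∀ c : (G.induce B).ConnectedComponent, φ c = K → c = c0 := by
    intro c hc
    obtain ⟨x0, hx0⟩ := c.exists_rep
    replace hx0 : (G.induce B).connectedComponentMk x0 = c := hx0
    have hfx0 : f x0 ∈ K.supp := by
      rw [SimpleGraph.ConnectedComponent.mem_supp_iff, ← hc, ← hx0, hφmk]
    obtain ⟨p, hp⟩ := hcut (f x0) z0 hfx0 hz0K (hneu x0) hz0u
    have hsup : ∀ s ∈ p.support, (s : V) ∈ B := by
      intro s hs
      rw [hmemB]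
      refine ⟨s.2, fun hsu => hp ?_⟩
      have : s = uA := Subtype.ext hsu
      rwa [← this]
    have hx0B : ((f x0 : ↥A) : V) ∈ B := hsup _ p.start_mem_support
    have hz0B' : ((z0 : ↥A) : V) ∈ B := hsup _ p.end_mem_support
    have hre := reach_down G p hsup hx0B hz0B'
    rw [← hx0, hc0]
    rw [SimpleGraph.ConnectedComponent.eq]
    have h1 : (⟨((f x0 : ↥A) : V), hx0B⟩ : ↥B) = x0 := Subtype.ext (hfval x0)
    have h2 : (⟨((z0 : ↥A) : V), hz0B'⟩ : ↥B) = w0 := Subtype.ext rfl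
    rwa [h1, h2] at hre
  have hinjf : Function.Injective (fun x : ↥B => f x) := f.injective
  -- supports of components not equal to K
  have cl_supp : ∀ c : (G.induce B).ConnectedComponent, φ c ≠ K →
      (φ c).supp = (fun x : ↥B => f x) '' c.supp := by
    intro c hcK
    ext y
    constructor
    · intro hy
      obtain ⟨hyB, hmem⟩ := cl_back c y hy hcK
      exact ⟨⟨(y : V), hyB⟩, hmem, Subtype.ext rfl⟩
    · rintro ⟨x, hx, rfl⟩
      rw [SimpleGraph.ConnectedComponent.mem_supp_iff] at hx ⊢
      rw [← hx, hφmk]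
  have cl_card : ∀ c : (G.induce B).ConnectedComponent, φ c ≠ K →
      (φ c).supp.ncard = c.supp.ncard := by
    intro c hcK
    rw [cl_supp c hcK, Set.ncard_image_of_injective _ hinjf]
  -- support of K
  have cl_suppK : K.supp = insert uA ((fun x : ↥B => f x) '' c0.supp) := by
    ext y
    constructor
    · intro hy
      by_cases hyu : y = uA
      · exact Or.inl hyu
      · obtain ⟨p, hp⟩ := hcut y z0 hy hz0K hyu hz0u
        have hsup : ∀ s ∈ p.support, (s : V) ∈ B := by
          intro s hs
          rw [hmemB]
          refine ⟨s.2, fun hsu => hp ?_⟩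
          have : s = uA := Subtype.ext hsu
          rwa [← this]
        have hyB : ((y : ↥A) : V) ∈ B := hsup _ p.start_mem_support
        have hz0B' : ((z0 : ↥A) : V) ∈ B := hsup _ p.end_mem_support
        have hre := reach_down G p hsup hyB hz0B'
        refine Or.inr ⟨⟨(y : V), hyB⟩, ?_, Subtype.ext rfl⟩
        rw [SimpleGraph.ConnectedComponent.mem_supp_iff, hc0]
        rw [SimpleGraph.ConnectedComponent.eq]
        have h2 : (⟨((z0 : ↥A) : V), hz0B'⟩ : ↥B) = w0 := Subtype.ext rfl
        rwa [h2] at hre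
    · rintro (rfl | ⟨x, hx, rfl⟩)
      · rw [SimpleGraph.ConnectedComponent.mem_supp_iff]
      · rw [SimpleGraph.ConnectedComponent.mem_supp_iff] at hx ⊢
        have : φ ((G.induce B).connectedComponentMk x) = φ c0 := by rw [hx]
        rw [hφmk, hφc0] at this
        exact this
  have cl_cardK : K.supp.ncard = c0.supp.ncard + 1 := by
    rw [cl_suppK]
    rw [Set.ncard_insert_of_notMem (fun h => by
      obtain ⟨x, _, hx⟩ := h
      exact hneu x hx) (Set.toFinite _)]
    rw [Set.ncard_image_of_injective _ hinjf]
  have hc0odd : Odd c0.supp.ncard := by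
    rw [Nat.not_odd_iff_even, cl_cardK] at hKev
    rcases Nat.even_or_odd c0.supp.ncard with h | h
    · exfalso; exact (Nat.even_add_one.mp hKev) h
    · exact h
  -- injectivity of φ
  have hinjφ : Function.Injective φ := by
    intro c c' hcc
    by_cases hcK : φ c = K
    · rw [cl_K c hcK, cl_K c' (hcc ▸ hcK)]
    · obtain ⟨x0, hx0⟩ := c.exists_rep
      replace hx0 : (G.induce B).connectedComponentMk x0 = c := hx0
      have hfx0 : f x0 ∈ (φ c').supp := by
        rw [SimpleGraph.ConnectedComponent.mem_supp_iff, ← hcc, ← hx0, hφmk]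
      obtain ⟨hyB, hmem⟩ := cl_back c' (f x0) hfx0 (by rw [← hcc]; exact hcK)
      rw [SimpleGraph.ConnectedComponent.mem_supp_iff] at hmem
      have : (⟨((f x0 : ↥A) : V), hyB⟩ : ↥B) = x0 := Subtype.ext (hfval x0)
      rw [this] at hmem
      rw [← hx0, hmem]
  -- the image of the odd components
  have himg : φ '' {c : (G.induce B).ConnectedComponent | Odd c.supp.ncard} =
      insert K {d : (G.induce A).ConnectedComponent | Odd d.supp.ncard} := by
    ext d
    constructor
    · rintro ⟨c, hc, rfl⟩
      by_cases hcK : φ c = K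
      · exact Or.inl hcK
      · exact Or.inr (by rw [Set.mem_setOf_eq, cl_card c hcK]; exact hc)
    · rintro (rfl | hd)
      · exact ⟨c0, hc0odd, hφc0⟩
      · have hdK : d ≠ K := fun h => hKev (h ▸ hd)
        obtain ⟨y, hy⟩ := d.exists_rep
        replace hy : (G.induce A).connectedComponentMk y = d := hy
        have hyd : y ∈ d.supp := by rw [SimpleGraph.ConnectedComponent.mem_supp_iff]; exact hy
        have hyu : y ≠ uA := by
          intro h
          exact hdK (by rw [← hy, h])
        have hyB : (y : V) ∈ B := by
          rw [hmemB]
          exact ⟨y.2, fun h => hyu (Subtype.ext h)⟩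
        set c : (G.induce B).ConnectedComponent :=
          (G.induce B).connectedComponentMk ⟨(y : V), hyB⟩ with hc
        have hφc : φ c = d := by
          rw [hc, hφmk, ← hy]
          congr 1
        refine ⟨c, ?_, hφc⟩
        rw [Set.mem_setOf_eq, ← cl_card c (by rw [hφc]; exact hdK), hφc]
        exact hd
  have hKnot : K ∉ {d : (G.induce A).ConnectedComponent | Odd d.supp.ncard} := hKev
  -- count
  show {c : (G.induce B).ConnectedComponent | Odd c.supp.ncard}.ncard =
    {d : (G.induce A).ConnectedComponent | Odd d.supp.ncard}.ncard + 1
  rw [← Set.ncard_image_of_injective _ hinjφ, himg,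
    Set.ncard_insert_of_notMem hKnot (Set.toFinite _)]

end AuxProof

theorem stmt19 {V : Type*} [Fintype V] (G : SimpleGraph V)
    (X : Set V) (hX : IsOddMaximalBarrierGen G X) :
    (∀ Y : Set V, X ⊂ Y → ¬ IsBarrierGen G Y) ↔ CX G X = ∅ := by
  classical
  constructor
  · intro hmax
    by_contra hC
    obtain ⟨v, hv⟩ := Set.nonempty_iff_ne_empty.mpr hC
    have hv' : v ∉ X ∪ DX G X := hv
    have hvX : v ∉ X := fun h => hv' (Or.inl h)
    have hvA : v ∈ Xᶜ := hvX
    have hvD : v ∉ DX G X := fun h => hv' (Or.inr h)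
    have hev : ¬ Odd ((G.induce Xᶜ).connectedComponentMk ⟨v, hvA⟩).supp.ncard :=
      fun ho => hvD ⟨hvA, ho⟩
    set K := (G.induce Xᶜ).connectedComponentMk ⟨v, hvA⟩ with hK
    have hKpos : 0 < K.supp.ncard := by
      rw [Set.ncard_pos K.supp.toFinite]
      exact ⟨⟨v, hvA⟩, by rw [SimpleGraph.ConnectedComponent.mem_supp_iff]⟩
    have hK2 : 1 < K.supp.ncard := by
      rw [Nat.not_odd_iff_even] at hev
      obtain ⟨k, hk⟩ := hev
      omega
    obtain ⟨uA, huK, hcut⟩ := exists_noncut (G.induce Xᶜ) K hK2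
    have hmkuK : (G.induce Xᶜ).connectedComponentMk uA = K :=
      (K.mem_supp_iff uA).mp huK
    have huA : (uA : V) ∈ Xᶜ := uA.2
    have heta : (⟨(uA : V), huA⟩ : ↥(Xᶜ : Set V)) = uA := Subtype.ext rfl
    have hev' : ¬ Odd ((G.induce Xᶜ).connectedComponentMk ⟨(uA : V), huA⟩).supp.ncard := by
      rw [heta, hmkuK]; exact hev
    have hcut' : ∀ w z, w ∈ ((G.induce Xᶜ).connectedComponentMk ⟨(uA : V), huA⟩).supp →
        z ∈ ((G.induce Xᶜ).connectedComponentMk ⟨(uA : V), huA⟩).supp →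
        w ≠ ⟨(uA : V), huA⟩ → z ≠ ⟨(uA : V), huA⟩ →
        ∃ p : (G.induce Xᶜ).Walk w z, (⟨(uA : V), huA⟩ : ↥(Xᶜ : Set V)) ∉ p.support := by
      rw [heta, hmkuK]
      exact hcut
    have hq := qG_insert G X (uA : V) huA hev' hcut'
    have huX : (uA : V) ∉ X := huA
    have hss : X ⊂ X ∪ {(uA : V)} := by
      rw [Set.union_singleton]
      exact Set.ssubset_insert huX
    refine hmax (X ∪ {(uA : V)}) hss ?_
    unfold IsBarrierGen
    rw [hq, hX.1, Set.union_singleton, Set.ncard_insert_of_notMem huX X.toFinite]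
    omega
  · intro hC Y hY hbar
    have hsub : Y \ X ⊆ DX G X := by
      intro z hz
      have hz' : z ∈ X ∪ DX G X := by
        by_contra h
        have : z ∈ CX G X := h
        rw [hC] at this
        exact this
      rcases hz' with h | h
      · exact absurd h hz.2
      · exact h
    have hne : (Y \ X).Nonempty := Set.nonempty_of_ssubset hY
    have := hX.2 (Y \ X) hsub hne
    rw [Set.union_diff_cancel hY.subset] at this
    exact this hbar
end
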